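/- arXiv:1703.02330 — 5 statements merged into one kernel-verified Lean document; each statement's English description precedes it below -/
import Mathlib

section
/- Suppose conditions (ND1) and (ND2) hold, P{A>0}=1, the perpetuity X=∑_{k≥1}Π_{k-1}B_k converges a.s. (|X|<∞ a.s.), and let r>0. If P{A≤1}=1, E[e^{rB}]<∞ and E[e^{rB}·1_{{A=1}}]<1, then E[e^{rX}]<∞. -/
open MeasureTheory ProbabilityTheory Filter Finset Topology
open scoped ENNReal NNReal

lemma exp_le_aux1 {a y s δ : ℝ} (ha : 0 ≤ a) (haδ : a ≤ δ) (hδ1 : δ ≤ 1) (hs : 1 ≤ s) :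
    Real.exp (a * y) ≤ s ^ δ + s ^ (δ - 1) * Real.exp y := by
  have hδ0 : 0 ≤ δ := le_trans ha haδ
  have hs0 : 0 < s := lt_of_lt_of_le one_pos hs
  have hsδ : 1 ≤ s ^ δ := Real.one_le_rpow hs hδ0
  rcases le_or_gt y 0 with hy | hy
  · have h1 : Real.exp (a * y) ≤ 1 := Real.exp_le_one_iff.2 (mul_nonpos_of_nonneg_of_nonpos ha hy)
    have h2 : 0 ≤ s ^ (δ - 1) * Real.exp y :=
      mul_nonneg (Real.rpow_nonneg hs0.le _) (Real.exp_pos _).le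
    linarith
  · have h1 : Real.exp (a * y) ≤ Real.exp (δ * y) :=
      Real.exp_le_exp.2 (mul_le_mul_of_nonneg_right haδ hy.le)
    have h2 : Real.exp (δ * y) = Real.exp y ^ δ := by
      rw [mul_comm, Real.exp_mul]
    set x := Real.exp y with hx
    have hx1 : 1 < x := Real.one_lt_exp_iff.2 hy  -- check name
    rcases le_or_gt x s with hxs | hxs
    · have : x ^ δ ≤ s ^ δ := Real.rpow_le_rpow (by linarith) hxs hδ0
      have h3 : 0 ≤ s ^ (δ - 1) * x := mul_nonneg (Real.rpow_nonneg hs0.le _) (by linarith)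
      calc Real.exp (a*y) ≤ x ^ δ := h2 ▸ h1
        _ ≤ s ^ δ := this
        _ ≤ _ := by linarith
    · have hx0 : 0 < x := by linarith
      have h3 : x ^ δ = x ^ (δ - 1) * x := by
        rw [Real.rpow_sub_one hx0.ne', div_mul_cancel₀]
        exact hx0.ne'
      have h4 : x ^ (δ - 1) ≤ s ^ (δ - 1) :=
        Real.rpow_le_rpow_of_nonpos hs0 hxs.le (by linarith)
      calc Real.exp (a*y) ≤ x ^ δ := h2 ▸ h1
        _ = x ^ (δ-1) * x := h3
        _ ≤ s ^ (δ-1) * x := mul_le_mul_of_nonneg_right h4 hx0.le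
        _ ≤ s ^ δ + s ^ (δ-1) * x := le_add_of_nonneg_left (by positivity)

lemma exp_le_aux2 {a y : ℝ} (ha : 0 ≤ a) (ha1 : a ≤ 1) :
    Real.exp (a * y) ≤ 1 + Real.exp y := by
  rcases le_or_gt y 0 with hy | hy
  · have h1 : Real.exp (a * y) ≤ 1 := Real.exp_le_one_iff.2 (mul_nonpos_of_nonneg_of_nonpos ha hy)
    linarith [(Real.exp_pos y).le]
  · have h1 : Real.exp (a * y) ≤ Real.exp y := Real.exp_le_exp.2 (by nlinarith)
    linarith

lemma iIndepFun_shift {Ω : Type*} [MeasurableSpace Ω] {μ : Measure Ω} {β : Type*}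
    [m : MeasurableSpace β] {f : ℕ → Ω → β}
    (h : iIndepFun f μ) : iIndepFun (fun i => f (i + 1)) μ := by
  classical
  rw [iIndepFun_iff_measure_inter_preimage_eq_mul] at h ⊢
  intro S sets hsets
  have hinj : ∀ a ∈ S, ∀ b ∈ S, Nat.succ a = Nat.succ b → a = b :=
    fun a _ b _ hab => Nat.succ_injective hab
  have key := h (S.image Nat.succ) (sets := fun j => sets (j - 1)) ?_
  · have hL : (⋂ i ∈ S.image Nat.succ, f i ⁻¹' sets (i - 1)) = ⋂ i ∈ S, f (i + 1) ⁻¹' sets i := by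
      ext ω
      simp only [Set.mem_iInter, Finset.mem_image]
      constructor
      · intro hω i hi
        simpa using hω (i + 1) ⟨i, hi, rfl⟩
      · rintro hω j ⟨i, hi, rfl⟩
        simpa using hω i hi
    have hR : ∏ i ∈ S.image Nat.succ, μ (f i ⁻¹' sets (i - 1))
        = ∏ i ∈ S, μ (f (i + 1) ⁻¹' sets i) := by
      rw [Finset.prod_image hinj]
      exact Finset.prod_congr rfl fun i _ => by simp
    rw [hL, hR] at key
    exact key
  · rintro j hj
    rw [Finset.mem_image] at hj
    obtain ⟨i, hi, rfl⟩ := hj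
    simpa using hsets i hi

lemma perp_aux {Ω : Type*} [MeasureSpace Ω] [IsProbabilityMeasure (ℙ : Measure Ω)]
    (r δ s : ℝ) (hδ1 : δ ≤ 1) (hδ0 : 0 ≤ δ) (hs : 1 ≤ s)
    (m β t : ℝ≥0∞)
    (hrec : ENNReal.ofReal (s ^ δ) * m + β + (ENNReal.ofReal (s ^ (δ - 1)) * m + β) * t ≤ t)
    (ht1 : 1 ≤ t) (n : ℕ) :
    ∀ (A B : ℕ → Ω → ℝ), (∀ i, Measurable (A i)) → (∀ i, Measurable (B i)) →
      iIndepFun (fun i ω => (A i ω, B i ω)) ℙ →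
      (∀ i, ∀ᵐ ω ∂ℙ, 0 ≤ A i ω ∧ A i ω ≤ 1) →
      (∀ i, ∫⁻ ω in {ω | A i ω ≤ δ}, ENNReal.ofReal (Real.exp (r * B i ω)) ∂ℙ ≤ m) →
      (∀ i, ∫⁻ ω in {ω | δ < A i ω}, ENNReal.ofReal (Real.exp (r * B i ω)) ∂ℙ ≤ β) →
      ∫⁻ ω, ENNReal.ofReal (Real.exp (r * ∑ k ∈ Finset.range n,
        (∏ i ∈ Finset.range k, A i ω) * B k ω)) ∂ℙ ≤ t := by
  classical
  induction n with
  | zero =>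
    intro A B _ _ _ _ _ _
    simpa using ht1
  | succ n ih =>
    intro A B hA hB hindep hae hm hβ
    set Y : Ω → ℝ := fun ω => ∑ k ∈ Finset.range n,
      (∏ i ∈ Finset.range k, A (i + 1) ω) * B (k + 1) ω with hYdef
    have hYmeas : Measurable Y := by
      apply Finset.measurable_sum
      intro k _
      exact (Finset.measurable_prod _ fun i _ => hA (i + 1)).mul (hB (k + 1))
    have hXeq : ∀ ω, ∑ k ∈ Finset.range (n + 1), (∏ i ∈ Finset.range k, A i ω) * B k ω
        = B 0 ω + A 0 ω * Y ω := by
      intro ω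
      rw [Finset.sum_range_succ']
      simp only [Finset.prod_range_succ', Finset.prod_range_zero, one_mul]
      rw [add_comm]
      congr 1
      rw [hYdef, Finset.mul_sum]
      exact Finset.sum_congr rfl fun k _ => by ring
    -- independence of (A 0, B 0) and Y
    set f : ℕ → Ω → ℝ × ℝ := fun i ω => (A i ω, B i ω) with hfdef
    have hfmeas : ∀ i, Measurable (f i) := fun i => (hA i).prodMk (hB i)
    set T : Finset ℕ := (Finset.range n).image Nat.succ with hTdef
    have hdisj : Disjoint ({0} : Finset ℕ) T := by
      simp only [Finset.disjoint_singleton_left, hTdef, Finset.mem_image]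
      rintro ⟨i, -, h⟩
      exact Nat.succ_ne_zero i h
    have base := hindep.indepFun_finset {0} T hdisj hfmeas
    set ext2 : ({x // x ∈ T} → ℝ × ℝ) → (ℕ → ℝ × ℝ) :=
      fun v j => if h : j ∈ T then v ⟨j, h⟩ else 0 with hext2def
    have hext2 : Measurable ext2 := by
      apply measurable_pi_lambda
      intro j
      by_cases h : j ∈ T
      · simp only [hext2def, dif_pos h]
        exact measurable_pi_apply _
      · simp only [hext2def, dif_neg h]
        exact measurable_const
    set Φ : (ℕ → ℝ × ℝ) → ℝ := fun u => ∑ k ∈ Finset.range n,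
      (∏ i ∈ Finset.range k, (u (i + 1)).1) * (u (k + 1)).2 with hΦdef
    have hΦ : Measurable Φ := by
      apply Finset.measurable_sum
      intro k _
      exact (Finset.measurable_prod _ fun i _ =>
        (measurable_pi_apply (i + 1)).fst).mul (measurable_pi_apply (k + 1)).snd
    have hg1 : Measurable (fun v : ({x // x ∈ ({0} : Finset ℕ)} → ℝ × ℝ) =>
        v ⟨0, Finset.mem_singleton_self 0⟩) := measurable_pi_apply _
    have hindepY : IndepFun (f 0) Y ℙ := by
      have h2 := base.comp hg1 (hΦ.comp hext2)
      have e2 : ((Φ ∘ ext2) ∘ (fun ω (i : {x // x ∈ T}) => f i ω)) = Y := by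
        funext ω
        show Φ (ext2 (fun i : {x // x ∈ T} => f i ω)) = Y ω
        rw [hΦdef, hYdef]
        apply Finset.sum_congr rfl
        intro k hk
        rw [Finset.mem_range] at hk
        have hk1 : (k + 1) ∈ T := Finset.mem_image.2 ⟨k, Finset.mem_range.2 hk, rfl⟩
        have h1 : ∀ i, i < k → (i + 1) ∈ T := fun i hi =>
          Finset.mem_image.2 ⟨i, Finset.mem_range.2 (hi.trans hk), rfl⟩
        simp only [Function.comp_apply, hΦdef, hext2def]
        rw [dif_pos hk1]
        congr 1
        apply Finset.prod_congr rfl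
        intro i hi
        rw [Finset.mem_range] at hi
        rw [dif_pos (h1 i hi)]
      have e1 : ((fun v : ({x // x ∈ ({0} : Finset ℕ)} → ℝ × ℝ) =>
          v ⟨0, Finset.mem_singleton_self 0⟩) ∘ (fun ω (i : {x // x ∈ ({0} : Finset ℕ)}) => f i ω))
          = f 0 := rfl
      rw [e1, e2] at h2
      exact h2
    -- apply IH to shifted sequence
    have hYint : ∫⁻ ω, ENNReal.ofReal (Real.exp (r * Y ω)) ∂ℙ ≤ t :=
      ih (fun i => A (i + 1)) (fun i => B (i + 1)) (fun i => hA _) (fun i => hB _)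
        (iIndepFun_shift hindep) (fun i => hae (i + 1)) (fun i => hm (i + 1))
        (fun i => hβ (i + 1))
    -- pointwise bound
    set φ1 : ℝ × ℝ → ℝ≥0∞ := fun p =>
      if p.1 ≤ δ then ENNReal.ofReal (Real.exp (r * p.2)) else 0 with hφ1def
    set φ2 : ℝ × ℝ → ℝ≥0∞ := fun p =>
      if δ < p.1 then ENNReal.ofReal (Real.exp (r * p.2)) else 0 with hφ2def
    have hφ1 : Measurable φ1 := by
      apply Measurable.ite (measurableSet_le measurable_fst measurable_const)
      · exact (measurable_snd.const_mul r).exp.ennreal_ofReal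
      · exact measurable_const
    have hφ2 : Measurable φ2 := by
      apply Measurable.ite (measurableSet_lt measurable_const measurable_fst)
      · exact (measurable_snd.const_mul r).exp.ennreal_ofReal
      · exact measurable_const
    set ψ : ℝ → ℝ≥0∞ := fun y => ENNReal.ofReal (Real.exp (r * y)) with hψdef
    have hψ : Measurable ψ := (measurable_id.const_mul r).exp.ennreal_ofReal
    set E : Ω → ℝ≥0∞ := fun ω => ENNReal.ofReal (Real.exp (r * Y ω)) with hEdef
    have hEmeas : Measurable E := (hYmeas.const_mul r).exp.ennreal_ofReal
    set I1 : Ω → ℝ≥0∞ := fun ω => φ1 (f 0 ω) with hI1def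
    set I2 : Ω → ℝ≥0∞ := fun ω => φ2 (f 0 ω) with hI2def
    have hI1meas : Measurable I1 := hφ1.comp (hfmeas 0)
    have hI2meas : Measurable I2 := hφ2.comp (hfmeas 0)
    have hindep1 : IndepFun I1 E ℙ := hindepY.comp hφ1 hψ
    have hindep2 : IndepFun I2 E ℙ := hindepY.comp hφ2 hψ
    have hsum1 : ∫⁻ ω, I1 ω ∂ℙ ≤ m := by
      have : ∫⁻ ω, I1 ω ∂ℙ = ∫⁻ ω in {ω | A 0 ω ≤ δ}, ENNReal.ofReal (Real.exp (r * B 0 ω)) ∂ℙ := by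
        rw [← lintegral_indicator (measurableSet_le (hA 0) measurable_const)]
        apply lintegral_congr
        intro ω
        simp only [hI1def, hφ1def, hfdef, Set.indicator_apply, Set.mem_setOf_eq]
      rw [this]; exact hm 0
    have hsum2 : ∫⁻ ω, I2 ω ∂ℙ ≤ β := by
      have : ∫⁻ ω, I2 ω ∂ℙ = ∫⁻ ω in {ω | δ < A 0 ω}, ENNReal.ofReal (Real.exp (r * B 0 ω)) ∂ℙ := by
        rw [← lintegral_indicator (measurableSet_lt measurable_const (hA 0))]
        apply lintegral_congr
        intro ω
        simp only [hI2def, hφ2def, hfdef, Set.indicator_apply, Set.mem_setOf_eq]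
      rw [this]; exact hβ 0
    have hs0 : (0:ℝ) < s := lt_of_lt_of_le one_pos hs
    -- the pointwise bound
    have hbound : ∀ᵐ ω ∂ℙ, ENNReal.ofReal (Real.exp (r * ∑ k ∈ Finset.range (n + 1),
        (∏ i ∈ Finset.range k, A i ω) * B k ω))
        ≤ ENNReal.ofReal (s ^ δ) * I1 ω + ENNReal.ofReal (s ^ (δ - 1)) * (I1 ω * E ω)
          + I2 ω + I2 ω * E ω := by
      filter_upwards [hae 0] with ω hω
      obtain ⟨h0, h1⟩ := hω
      rw [hXeq ω]
      have hexp : Real.exp (r * (B 0 ω + A 0 ω * Y ω))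
          = Real.exp (r * B 0 ω) * Real.exp (A 0 ω * (r * Y ω)) := by
        rw [← Real.exp_add]; ring_nf
      by_cases hc : A 0 ω ≤ δ
      · have hI1 : I1 ω = ENNReal.ofReal (Real.exp (r * B 0 ω)) := by
          simp only [hI1def, hφ1def, hfdef, if_pos hc]
        have hI2 : I2 ω = 0 := by
          simp only [hI2def, hφ2def, hfdef, if_neg (not_lt.2 hc)]
        rw [hI1, hI2]
        simp only [mul_zero, zero_mul, add_zero, zero_add]
        have hreal : Real.exp (r * (B 0 ω + A 0 ω * Y ω))
            ≤ s ^ δ * Real.exp (r * B 0 ω)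
              + s ^ (δ - 1) * (Real.exp (r * B 0 ω) * Real.exp (r * Y ω)) := by
          rw [hexp]
          have := exp_le_aux1 (a := A 0 ω) (y := r * Y ω) h0 hc hδ1 hs
          nlinarith [Real.exp_pos (r * B 0 ω), Real.exp_pos (r * Y ω)]
        calc ENNReal.ofReal (Real.exp (r * (B 0 ω + A 0 ω * Y ω)))
            ≤ ENNReal.ofReal (s ^ δ * Real.exp (r * B 0 ω)
              + s ^ (δ - 1) * (Real.exp (r * B 0 ω) * Real.exp (r * Y ω))) :=
              ENNReal.ofReal_le_ofReal hreal
          _ = ENNReal.ofReal (s ^ δ) * ENNReal.ofReal (Real.exp (r * B 0 ω))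
              + ENNReal.ofReal (s ^ (δ - 1)) * (ENNReal.ofReal (Real.exp (r * B 0 ω)) * E ω) := by
              rw [ENNReal.ofReal_add (by positivity) (by positivity),
                ENNReal.ofReal_mul (Real.rpow_nonneg hs0.le _),
                ENNReal.ofReal_mul (Real.rpow_nonneg hs0.le _),
                ENNReal.ofReal_mul (Real.exp_pos _).le]
      · have hI1 : I1 ω = 0 := by
          simp only [hI1def, hφ1def, hfdef, if_neg hc]
        have hI2 : I2 ω = ENNReal.ofReal (Real.exp (r * B 0 ω)) := by
          simp only [hI2def, hφ2def, hfdef, if_pos (not_le.1 hc)]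
        rw [hI1, hI2]
        simp only [mul_zero, zero_mul, add_zero, zero_add]
        have hreal : Real.exp (r * (B 0 ω + A 0 ω * Y ω))
            ≤ Real.exp (r * B 0 ω) + Real.exp (r * B 0 ω) * Real.exp (r * Y ω) := by
          rw [hexp]
          have := exp_le_aux2 (a := A 0 ω) (y := r * Y ω) h0 h1
          nlinarith [Real.exp_pos (r * B 0 ω), Real.exp_pos (r * Y ω)]
        calc ENNReal.ofReal (Real.exp (r * (B 0 ω + A 0 ω * Y ω)))
            ≤ ENNReal.ofReal (Real.exp (r * B 0 ω)
              + Real.exp (r * B 0 ω) * Real.exp (r * Y ω)) := ENNReal.ofReal_le_ofReal hreal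
          _ = ENNReal.ofReal (Real.exp (r * B 0 ω))
              + ENNReal.ofReal (Real.exp (r * B 0 ω)) * E ω := by
              rw [ENNReal.ofReal_add (by positivity) (by positivity),
                ENNReal.ofReal_mul (Real.exp_pos _).le]
    calc ∫⁻ ω, ENNReal.ofReal (Real.exp (r * ∑ k ∈ Finset.range (n + 1),
          (∏ i ∈ Finset.range k, A i ω) * B k ω)) ∂ℙ
        ≤ ∫⁻ ω, (ENNReal.ofReal (s ^ δ) * I1 ω + ENNReal.ofReal (s ^ (δ - 1)) * (I1 ω * E ω)
          + I2 ω + I2 ω * E ω) ∂ℙ := lintegral_mono_ae hbound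
      _ = ENNReal.ofReal (s ^ δ) * ∫⁻ ω, I1 ω ∂ℙ
          + ENNReal.ofReal (s ^ (δ - 1)) * ∫⁻ ω, I1 ω * E ω ∂ℙ
          + ∫⁻ ω, I2 ω ∂ℙ + ∫⁻ ω, I2 ω * E ω ∂ℙ := by
          rw [lintegral_add_right _ (g := fun ω => I2 ω * E ω) (hI2meas.mul hEmeas),
            lintegral_add_right _ hI2meas,
            lintegral_add_right _ (g := fun ω => ENNReal.ofReal (s ^ (δ - 1)) * (I1 ω * E ω)) ((hI1meas.mul hEmeas).const_mul _),
            lintegral_const_mul _ hI1meas,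
            lintegral_const_mul _ (f := fun ω => I1 ω * E ω) (hI1meas.mul hEmeas)]
      _ = ENNReal.ofReal (s ^ δ) * ∫⁻ ω, I1 ω ∂ℙ
          + ENNReal.ofReal (s ^ (δ - 1)) * ((∫⁻ ω, I1 ω ∂ℙ) * ∫⁻ ω, E ω ∂ℙ)
          + ∫⁻ ω, I2 ω ∂ℙ + (∫⁻ ω, I2 ω ∂ℙ) * ∫⁻ ω, E ω ∂ℙ := by
          rw [lintegral_mul_eq_lintegral_mul_lintegral_of_indepFun'' hI1meas.aemeasurable
              hEmeas.aemeasurable hindep1,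
            lintegral_mul_eq_lintegral_mul_lintegral_of_indepFun'' hI2meas.aemeasurable
              hEmeas.aemeasurable hindep2]
      _ ≤ ENNReal.ofReal (s ^ δ) * m + ENNReal.ofReal (s ^ (δ - 1)) * (m * t)
          + β + β * t := by
          gcongr
      _ = ENNReal.ofReal (s ^ δ) * m + β + (ENNReal.ofReal (s ^ (δ - 1)) * m + β) * t := by
          ring
      _ ≤ t := hrec
theorem stmt_0
    {Ω : Type*} [MeasureSpace Ω] [IsProbabilityMeasure (ℙ : Measure Ω)]
    (A B : ℕ → Ω → ℝ) (X : Ω → ℝ)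
    (hA : ∀ n, Measurable (A n)) (hB : ∀ n, Measurable (B n)) (hX : Measurable X)
    (hindep : iIndepFun (fun n ω => (A n ω, B n ω)) ℙ)
    (hident : ∀ n, IdentDistrib (fun ω => (A n ω, B n ω)) (fun ω => (A 0 ω, B 0 ω)) ℙ ℙ)
    (hND1a : ℙ {ω | A 0 ω = 0} = 0) (hND1b : ℙ {ω | B 0 ω = 0} < 1)
    (hND2 : ∀ c : ℝ, ℙ {ω | B 0 ω + A 0 ω * c = c} < 1)
    (hApos : ℙ {ω | 0 < A 0 ω} = 1)
    (hXconv : ∀ᵐ ω ∂ℙ, Tendsto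
      (fun n => ∑ k ∈ Finset.range n, (∏ i ∈ Finset.range k, A i ω) * B k ω)
      atTop (nhds (X ω)))
    (r : ℝ) (hr : 0 < r)
    (hA1 : ℙ {ω | A 0 ω ≤ 1} = 1)
    (hBexp : ∫⁻ ω, ENNReal.ofReal (Real.exp (r * B 0 ω)) ∂ℙ < ⊤)
    (hB1 : ∫⁻ ω in {ω | A 0 ω = 1}, ENNReal.ofReal (Real.exp (r * B 0 ω)) ∂ℙ < 1) :
    ∫⁻ ω, ENNReal.ofReal (Real.exp (r * X ω)) ∂ℙ < ⊤ := by
  classical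
  have hpair : ∀ i, Measurable fun ω => (A i ω, B i ω) := fun i => (hA i).prodMk (hB i)
  -- a.e. bounds on A i
  have hSmeas : MeasurableSet {p : ℝ × ℝ | 0 ≤ p.1 ∧ p.1 ≤ 1} :=
    (measurableSet_le measurable_const measurable_fst).inter
      (measurableSet_le measurable_fst measurable_const)
  have hA1ae : ∀ᵐ ω ∂ℙ, A 0 ω ≤ 1 :=
    (mem_ae_iff_prob_eq_one (measurableSet_le (hA 0) measurable_const)).2 hA1
  have hAposae : ∀ᵐ ω ∂ℙ, 0 < A 0 ω :=
    (mem_ae_iff_prob_eq_one (measurableSet_lt measurable_const (hA 0))).2 hApos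
  have h00 : ∀ᵐ ω ∂ℙ, ω ∈ {ω | (A 0 ω, B 0 ω) ∈ {p : ℝ × ℝ | 0 ≤ p.1 ∧ p.1 ≤ 1}} := by
    filter_upwards [hA1ae, hAposae] with ω h1 h2
    exact ⟨h2.le, h1⟩
  have h01 : ∀ i, ∀ᵐ ω ∂ℙ, 0 ≤ A i ω ∧ A i ω ≤ 1 := by
    intro i
    have h1 : ℙ {ω | (A i ω, B i ω) ∈ {p : ℝ × ℝ | 0 ≤ p.1 ∧ p.1 ≤ 1}} = 1 := by
      rw [show {ω | (A i ω, B i ω) ∈ {p : ℝ × ℝ | 0 ≤ p.1 ∧ p.1 ≤ 1}}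
          = (fun ω => (A i ω, B i ω)) ⁻¹' {p : ℝ × ℝ | 0 ≤ p.1 ∧ p.1 ≤ 1} from rfl,
        (hident i).measure_mem_eq hSmeas]
      exact (mem_ae_iff_prob_eq_one (hSmeas.preimage (hpair 0))).1 h00
    exact (mem_ae_iff_prob_eq_one (hSmeas.preimage (hpair i))).2 h1
  -- transfer of lintegrals by identical distribution
  have htrans : ∀ (i : ℕ) (g : ℝ × ℝ → ℝ≥0∞), Measurable g →
      ∫⁻ ω, g (A i ω, B i ω) ∂ℙ = ∫⁻ ω, g (A 0 ω, B 0 ω) ∂ℙ := by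
    intro i g hg
    rw [← lintegral_map hg (hpair i), ← lintegral_map hg (hpair 0), (hident i).map_eq]
  -- the total mass m
  set W : Ω → ℝ≥0∞ := fun ω => ENNReal.ofReal (Real.exp (r * B 0 ω)) with hWdef
  have hWmeas : Measurable W := ((hB 0).const_mul r).exp.ennreal_ofReal
  set m : ℝ≥0∞ := ∫⁻ ω, W ω ∂ℙ with hmdef
  have hmtop : m ≠ ⊤ := hBexp.ne
  have hm0 : m ≠ 0 := by
    rw [hmdef]
    intro h
    have := (lintegral_eq_zero_iff hWmeas).1 h
    rw [Filter.EventuallyEq, ae_iff] at this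
    apply @one_ne_zero ℝ≥0∞
    calc (1 : ℝ≥0∞) = ℙ Set.univ := (measure_univ).symm
      _ = 0 := by
        rw [← this]
        congr 1
        ext ω
        simp [hWdef, ENNReal.ofReal_eq_zero, not_le, Real.exp_pos]
  -- the measure ν with density W
  set ν : Measure Ω := (ℙ : Measure Ω).withDensity W with hνdef
  have hν : ∀ S : Set Ω, MeasurableSet S → ν S = ∫⁻ ω in S, W ω ∂ℙ :=
    fun S hS => withDensity_apply W hS
  -- choice of δ
  set Sk : ℕ → Set Ω := fun k => {ω | 1 - 1 / (k + 1 : ℝ) < A 0 ω} with hSkdef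
  have hSkmeas : ∀ k, MeasurableSet (Sk k) := fun k =>
    measurableSet_lt measurable_const (hA 0)
  have hSkanti : Antitone Sk := by
    intro k l hkl ω hω
    simp only [hSkdef, Set.mem_setOf_eq] at hω ⊢
    have h1 : (1 : ℝ) / (l + 1) ≤ 1 / (k + 1) := by
      apply one_div_le_one_div_of_le
      · positivity
      · exact_mod_cast add_le_add_left (Nat.cast_le.2 hkl) 1
    exact lt_of_le_of_lt (by linarith) hω
  have hSkinter : ⋂ k, Sk k = {ω | 1 ≤ A 0 ω} := by
    ext ω
    simp only [Set.mem_iInter, hSkdef, Set.mem_setOf_eq]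
    constructor
    · intro h
      by_contra hlt
      push_neg at hlt
      obtain ⟨k, hk⟩ := exists_nat_one_div_lt (sub_pos.2 hlt)
      have := h k
      linarith
    · intro h k
      have : (0:ℝ) < 1 / (k + 1) := by positivity
      linarith
  have hνfin : ν Set.univ ≠ ⊤ := by
    rw [hν _ MeasurableSet.univ, Measure.restrict_univ]
    exact hmtop
  have hνlim : Tendsto (fun k => ν (Sk k)) atTop (𝓝 (ν (⋂ k, Sk k))) := by
    apply tendsto_measure_iInter_atTop (fun k => (hSkmeas k).nullMeasurableSet) hSkanti
    exact ⟨0, ne_top_of_le_ne_top hνfin (measure_mono (Set.subset_univ _))⟩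
  have hν1 : ν (⋂ k, Sk k) < 1 := by
    rw [hSkinter]
    have hsub : {ω | 1 ≤ A 0 ω} ⊆ {ω | A 0 ω = 1} ∪ {ω | 1 < A 0 ω} := by
      intro ω hω
      simp only [Set.mem_setOf_eq] at hω
      simp only [Set.mem_union, Set.mem_setOf_eq]
      rcases eq_or_lt_of_le hω with h | h
      · exact Or.inl h.symm
      · exact Or.inr h
    have hgt0 : ν {ω | 1 < A 0 ω} = 0 := by
      apply withDensity_absolutelyContinuous ℙ W
      have : {ω | 1 < A 0 ω} = {ω | A 0 ω ≤ 1}ᶜ := by ext ω; simp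
      rw [this, prob_compl_eq_zero_iff (measurableSet_le (hA 0) measurable_const)]
      exact hA1
    calc ν {ω | 1 ≤ A 0 ω} ≤ ν ({ω | A 0 ω = 1} ∪ {ω | 1 < A 0 ω}) := measure_mono hsub
      _ ≤ ν {ω | A 0 ω = 1} + ν {ω | 1 < A 0 ω} := measure_union_le _ _
      _ = ν {ω | A 0 ω = 1} := by rw [hgt0, add_zero]
      _ < 1 := by
        rw [hν _ (measurableSet_eq_fun (hA 0) measurable_const)]
        exact hB1
  have hev1 : ∀ᶠ k in atTop, ν (Sk k) < 1 := hνlim.eventually_lt_const hν1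
  have hev2 : ∀ᶠ k in atTop, 1 ≤ k := eventually_ge_atTop 1
  obtain ⟨k, hk⟩ := (hev1.and hev2).exists
  set δ : ℝ := 1 - 1 / (k + 1 : ℝ) with hδdef
  have hk1 : (1:ℕ) ≤ k := hk.2
  have hδ0 : 0 ≤ δ := by
    rw [hδdef]
    have h2 : (2:ℝ) ≤ k + 1 := by exact_mod_cast Nat.succ_le_succ hk1
    have : (1:ℝ) / (k + 1) ≤ 1 / 2 := by
      apply one_div_le_one_div_of_le <;> linarith
    linarith
  have hδ1 : δ ≤ 1 := by
    rw [hδdef]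
    have : (0:ℝ) < 1 / (k + 1) := by positivity
    linarith
  have hδlt1 : δ < 1 := by
    rw [hδdef]
    have : (0:ℝ) < 1 / (k + 1) := by positivity
    linarith
  set β : ℝ≥0∞ := ν (Sk k) with hβdef
  have hβ1 : β < 1 := hk.1
  have hβtop : β ≠ ⊤ := (hβ1.trans ENNReal.one_lt_top).ne
  -- per-index integral bounds
  set φ1 : ℝ × ℝ → ℝ≥0∞ := fun p =>
    if p.1 ≤ δ then ENNReal.ofReal (Real.exp (r * p.2)) else 0 with hφ1def
  set φ2 : ℝ × ℝ → ℝ≥0∞ := fun p =>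
    if δ < p.1 then ENNReal.ofReal (Real.exp (r * p.2)) else 0 with hφ2def
  have hφ1 : Measurable φ1 :=
    Measurable.ite (measurableSet_le measurable_fst measurable_const)
      (measurable_snd.const_mul r).exp.ennreal_ofReal measurable_const
  have hφ2 : Measurable φ2 :=
    Measurable.ite (measurableSet_lt measurable_const measurable_fst)
      (measurable_snd.const_mul r).exp.ennreal_ofReal measurable_const
  have hset1 : ∀ i, ∫⁻ ω in {ω | A i ω ≤ δ}, ENNReal.ofReal (Real.exp (r * B i ω)) ∂ℙ
      = ∫⁻ ω, φ1 (A i ω, B i ω) ∂ℙ := by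
    intro i
    rw [← lintegral_indicator (measurableSet_le (hA i) measurable_const)]
    apply lintegral_congr
    intro ω
    simp only [Set.indicator_apply, Set.mem_setOf_eq, hφ1def]
  have hset2 : ∀ i, ∫⁻ ω in {ω | δ < A i ω}, ENNReal.ofReal (Real.exp (r * B i ω)) ∂ℙ
      = ∫⁻ ω, φ2 (A i ω, B i ω) ∂ℙ := by
    intro i
    rw [← lintegral_indicator (measurableSet_lt measurable_const (hA i))]
    apply lintegral_congr
    intro ω
    simp only [Set.indicator_apply, Set.mem_setOf_eq, hφ2def]
  have hmi : ∀ i, ∫⁻ ω in {ω | A i ω ≤ δ}, ENNReal.ofReal (Real.exp (r * B i ω)) ∂ℙ ≤ m := by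
    intro i
    rw [hset1 i, htrans i φ1 hφ1, ← hset1 0]
    exact (setLIntegral_le_lintegral _ _)
  have hβk : ν (Sk k) = ∫⁻ ω in {ω | δ < A 0 ω}, ENNReal.ofReal (Real.exp (r * B 0 ω)) ∂ℙ := by
    rw [hν _ (hSkmeas k)]
  have hβi : ∀ i, ∫⁻ ω in {ω | δ < A i ω}, ENNReal.ofReal (Real.exp (r * B i ω)) ∂ℙ ≤ β := by
    intro i
    rw [hset2 i, htrans i φ2 hφ2, ← hset2 0, hβdef, hβk]
  -- choice of s
  set ε : ℝ≥0∞ := (1 - β) / 2 with hεdef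
  have h1β : (1:ℝ≥0∞) - β ≠ 0 := by
    simp only [ne_eq, tsub_eq_zero_iff_le, not_le]
    exact hβ1
  have hε0 : ε ≠ 0 := by
    rw [hεdef]
    simp [ENNReal.div_eq_zero_iff, h1β]
  have hεtop : ε ≠ ⊤ := by
    rw [hεdef]
    exact (ENNReal.div_lt_top (ne_top_of_le_ne_top ENNReal.one_ne_top tsub_le_self)
      two_ne_zero).ne
  have hεmtop : ε / m ≠ ⊤ := (ENNReal.div_lt_top hεtop hm0).ne
  have hεm0 : ε / m ≠ 0 := by
    simp [ENNReal.div_eq_zero_iff, hε0, hmtop]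
  have hu0 : 0 < (ε / m).toReal := ENNReal.toReal_pos hεm0 hεmtop
  have hrpow : Tendsto (fun x : ℝ => x ^ (δ - 1)) atTop (𝓝 0) := by
    have := tendsto_rpow_neg_atTop (y := 1 - δ) (by linarith)
    simpa [neg_sub] using this
  obtain ⟨s, hs1, hs2⟩ :=
    ((hrpow.eventually_lt_const hu0).and (eventually_ge_atTop 1)).exists
  have hs : 1 ≤ s := hs2
  have hsm : ENNReal.ofReal (s ^ (δ - 1)) * m ≤ ε := by
    calc ENNReal.ofReal (s ^ (δ - 1)) * m ≤ ENNReal.ofReal ((ε / m).toReal) * m :=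
          mul_le_mul_left (ENNReal.ofReal_le_ofReal hs1.le) m
      _ = ε / m * m := by rw [ENNReal.ofReal_toReal hεmtop]
      _ = ε := ENNReal.div_mul_cancel hm0 hmtop
  -- the constants q, c, t
  set q : ℝ≥0∞ := ENNReal.ofReal (s ^ (δ - 1)) * m + β with hqdef
  have hq1 : q < 1 := by
    calc q ≤ ε + β := add_le_add_left hsm β
      _ < (1 - β) + β := by
        apply ENNReal.add_lt_add_right hβtop
        exact ENNReal.half_lt_self h1β
          (ne_top_of_le_ne_top ENNReal.one_ne_top tsub_le_self)
      _ = 1 := by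
        rw [tsub_add_cancel_of_le hβ1.le]
  set c : ℝ≥0∞ := ENNReal.ofReal (s ^ δ) * m + β with hcdef
  have hctop : c ≠ ⊤ := by
    rw [hcdef]
    exact (ENNReal.add_lt_top.2 ⟨ENNReal.mul_lt_top ENNReal.ofReal_lt_top hmtop.lt_top,
      hβ1.trans ENNReal.one_lt_top⟩).ne
  have h1q0 : (1:ℝ≥0∞) - q ≠ 0 := by
    simp only [ne_eq, tsub_eq_zero_iff_le, not_le]
    exact hq1
  have h1qtop : (1:ℝ≥0∞) - q ≠ ⊤ := ne_top_of_le_ne_top ENNReal.one_ne_top tsub_le_self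
  set t : ℝ≥0∞ := 1 + c / (1 - q) with htdef
  have httop : t ≠ ⊤ := by
    rw [htdef]
    exact (ENNReal.add_lt_top.2 ⟨ENNReal.one_lt_top, ENNReal.div_lt_top hctop h1q0⟩).ne
  have ht1 : (1:ℝ≥0∞) ≤ t := le_add_right (le_refl 1)
  have hrec : c + q * t ≤ t := by
    have hx : (1 - q) * (c / (1 - q)) = c := ENNReal.mul_div_cancel h1q0 h1qtop
    have hxq : q + (1 - q) = 1 := add_tsub_cancel_of_le hq1.le
    have key : c + q * (c / (1 - q)) = c / (1 - q) := by
      calc c + q * (c / (1 - q)) = (1 - q) * (c / (1 - q)) + q * (c / (1 - q)) := by rw [hx]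
        _ = (q + (1 - q)) * (c / (1 - q)) := by ring
        _ = c / (1 - q) := by rw [hxq, one_mul]
    calc c + q * t = (c + q * (c / (1 - q))) + q := by rw [htdef]; ring
      _ = c / (1 - q) + q := by rw [key]
      _ ≤ c / (1 - q) + 1 := add_le_add_right hq1.le _
      _ = t := by rw [htdef, add_comm]
  -- the uniform bound
  have hfn : ∀ n, ∫⁻ ω, ENNReal.ofReal (Real.exp (r * ∑ k ∈ Finset.range n,
      (∏ i ∈ Finset.range k, A i ω) * B k ω)) ∂ℙ ≤ t :=
    fun n => perp_aux r δ s hδ1 hδ0 hs m β t hrec ht1 n A B hA hB hindep h01 hmi hβi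
  -- Fatou
  have hXnmeas : ∀ n, Measurable fun ω => ENNReal.ofReal (Real.exp (r * ∑ k ∈ Finset.range n,
      (∏ i ∈ Finset.range k, A i ω) * B k ω)) := by
    intro n
    apply Measurable.ennreal_ofReal
    apply Measurable.exp
    apply Measurable.const_mul
    apply Finset.measurable_sum
    intro k _
    exact (Finset.measurable_prod _ fun i _ => hA i).mul (hB k)
  have hlim : ∀ᵐ ω ∂ℙ, ENNReal.ofReal (Real.exp (r * X ω)) =
      Filter.liminf (fun n => ENNReal.ofReal (Real.exp (r * ∑ k ∈ Finset.range n,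
        (∏ i ∈ Finset.range k, A i ω) * B k ω))) atTop := by
    filter_upwards [hXconv] with ω h
    have : Tendsto (fun n => ENNReal.ofReal (Real.exp (r * ∑ k ∈ Finset.range n,
        (∏ i ∈ Finset.range k, A i ω) * B k ω))) atTop (𝓝 (ENNReal.ofReal (Real.exp (r * X ω)))) := by
      apply (ENNReal.continuous_ofReal.tendsto _).comp
      apply (Real.continuous_exp.tendsto _).comp
      exact h.const_mul r
    exact this.liminf_eq.symm
  calc ∫⁻ ω, ENNReal.ofReal (Real.exp (r * X ω)) ∂ℙ
      = ∫⁻ ω, Filter.liminf (fun n => ENNReal.ofReal (Real.exp (r * ∑ k ∈ Finset.range n,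
        (∏ i ∈ Finset.range k, A i ω) * B k ω))) atTop ∂ℙ := lintegral_congr_ae hlim
    _ ≤ Filter.liminf (fun n => ∫⁻ ω, ENNReal.ofReal (Real.exp (r * ∑ k ∈ Finset.range n,
        (∏ i ∈ Finset.range k, A i ω) * B k ω)) ∂ℙ) atTop := lintegral_liminf_le hXnmeas
    _ ≤ t := by
      have hev : ∀ᶠ n in (atTop : Filter ℕ), (∫⁻ ω, ENNReal.ofReal (Real.exp
          (r * ∑ k ∈ Finset.range n, (∏ i ∈ Finset.range k, A i ω) * B k ω)) ∂ℙ)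
          ≤ (fun _ => t) n := Filter.Eventually.of_forall hfn
      have h := Filter.liminf_le_liminf hev
      simpa [Filter.liminf_const] using h
    _ < ⊤ := httop.lt_top
end

section
/- Suppose conditions (ND1) and (ND2) hold, P{A∈(0,1]}=1, the perpetuity X=∑_{k≥1}Π_{k-1}B_k converges a.s. (|X|<∞ a.s.), and let r>0. If E[e^{rX}]<∞, then E[e^{rB}·1_{{A=1}}]<1 (irrespective of whether the support of the distribution of X is bounded from the right or not). -/
open MeasureTheory ProbabilityTheory Filter Finset

section

variable {Ω β : Type*} [MeasurableSpace Ω] {mβ : MeasurableSpace β}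
    {μ : Measure Ω} [IsProbabilityMeasure μ] {f : ℕ → Ω → β}

lemma aux_iIndepFun_precomp {Ω ι ι' β : Type*} [MeasurableSpace Ω] {mβ : MeasurableSpace β}
    {μ : Measure Ω} {f : ι → Ω → β} (u : ι' → ι) (hu : Function.Injective u)
    (h : iIndepFun f μ) :
    iIndepFun (fun j => f (u j)) μ := by
  classical
  rw [iIndepFun_iff_measure_inter_preimage_eq_mul] at h ⊢
  intro S sets hsets
  set sets' : ι → Set β := fun j => if h : ∃ i' ∈ S, u i' = j then sets h.choose else Set.univ
    with hsets'
  have key : ∀ i ∈ S, sets' (u i) = sets i := by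
    intro i hi
    have hex : ∃ i' ∈ S, u i' = u i := ⟨i, hi, rfl⟩
    have h2 := hex.choose_spec
    rw [hsets']
    simp only [dif_pos hex]
    exact congrArg sets (hu h2.2)
  have hmeas : ∀ j ∈ S.image u, MeasurableSet (sets' j) := by
    intro j hj
    rcases Finset.mem_image.1 hj with ⟨i, hi, rfl⟩
    rw [key i hi]; exact hsets i hi
  have h2 := h (S.image u) hmeas
  have hInt : (⋂ j ∈ S.image u, f j ⁻¹' sets' j) = ⋂ i ∈ S, (fun ω => f (u i) ω) ⁻¹' sets i := by
    ext x
    simp only [Set.mem_iInter, Finset.mem_image]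
    constructor
    · intro hx i hi
      have := hx (u i) ⟨i, hi, rfl⟩
      rwa [key i hi] at this
    · rintro hx j ⟨i, hi, rfl⟩
      rw [key i hi]; exact hx i hi
  have hProd : ∏ j ∈ S.image u, μ (f j ⁻¹' sets' j)
      = ∏ i ∈ S, μ ((fun ω => f (u i) ω) ⁻¹' sets i) := by
    rw [Finset.prod_image (fun i _ j _ hij => hu hij)]
    exact Finset.prod_congr rfl fun i hi => by rw [key i hi]
  rw [hInt, hProd] at h2
  exact h2

lemma aux_map_eq_pi (hf : ∀ k, Measurable (f k))
    (hindep : iIndepFun f μ)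
    (hident : ∀ k, IdentDistrib (f k) (f 0) μ μ)
    (u : ℕ → ℕ) (hu : Function.Injective u) (s : Finset ℕ) :
    Measure.map (fun ω (j : s) => f (u j) ω) μ
      = Measure.pi (fun _ : s => Measure.map (f 0) μ) := by
  haveI : IsProbabilityMeasure (Measure.map (f 0) μ) :=
    Measure.isProbabilityMeasure_map (hf 0).aemeasurable
  symm
  apply Measure.pi_eq
  intro t ht
  have hmeas : Measurable (fun ω (j : s) => f (u j) ω) :=
    measurable_pi_lambda _ fun j => hf (u j)
  rw [Measure.map_apply hmeas (MeasurableSet.univ_pi ht)]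
  have hpre : (fun ω (j : s) => f (u j) ω) ⁻¹' (Set.pi Set.univ t)
      = ⋂ j ∈ (Finset.univ : Finset s), (fun ω => f (u j) ω) ⁻¹' t j := by
    ext x
    simp [Set.mem_pi]
  rw [hpre]
  have hind2 := aux_iIndepFun_precomp (fun j : s => u j) (hu.comp Subtype.val_injective) hindep
  rw [hind2.measure_inter_preimage_eq_mul Finset.univ (fun j _ => ht j)]
  exact Finset.prod_congr rfl fun j _ => by
    rw [(hident (u j)).measure_mem_eq (ht j), Measure.map_apply (hf 0) (ht j)]

lemma aux_shift_law (hf : ∀ k, Measurable (f k))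
    (hindep : iIndepFun f μ)
    (hident : ∀ k, IdentDistrib (f k) (f 0) μ μ) (n : ℕ) :
    Measure.map (fun ω (k : ℕ) => f (n + k) ω) μ
      = Measure.map (fun ω (k : ℕ) => f k ω) μ := by
  have hm : ∀ m : ℕ, Measurable (fun ω (k : ℕ) => f (m + k) ω) := fun m =>
    measurable_pi_lambda _ fun k => hf (m + k)
  have hm0 : Measurable (fun ω (k : ℕ) => f k ω) := measurable_pi_lambda _ fun k => hf k
  haveI i1 : IsProbabilityMeasure (Measure.map (fun ω (k : ℕ) => f (n + k) ω) μ) :=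
    Measure.isProbabilityMeasure_map (hm n).aemeasurable
  haveI i2 : IsProbabilityMeasure (Measure.map (fun ω (k : ℕ) => f k ω) μ) :=
    Measure.isProbabilityMeasure_map hm0.aemeasurable
  refine ext_of_generate_finite _ generateFrom_measurableCylinders.symm
    isPiSystem_measurableCylinders (fun t ht => ?_) (by simp)
  obtain ⟨s, S, hS, rfl⟩ := (mem_measurableCylinders t).1 ht
  rw [Measure.map_apply (hm n) hS.cylinder, Measure.map_apply hm0 hS.cylinder]
  have e1 : (fun ω (k : ℕ) => f (n + k) ω) ⁻¹' (cylinder s S)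
      = (fun ω (j : s) => f (n + (j : ℕ)) ω) ⁻¹' S := rfl
  have e2 : (fun ω (k : ℕ) => f k ω) ⁻¹' (cylinder s S)
      = (fun ω (j : s) => f (j : ℕ) ω) ⁻¹' S := rfl
  rw [e1, e2]
  have h1 := aux_map_eq_pi hf hindep hident (fun k => n + k) (add_right_injective n) s
  have h2 := aux_map_eq_pi hf hindep hident id (fun a b h => h) s
  have m1 : Measurable (fun ω (j : s) => f (n + (j : ℕ)) ω) :=
    measurable_pi_lambda _ fun j => hf _
  have m2 : Measurable (fun ω (j : s) => f (j : ℕ) ω) :=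
    measurable_pi_lambda _ fun j => hf _
  rw [← Measure.map_apply m1 hS, ← Measure.map_apply m2 hS, h1]
  have : (fun ω (j : s) => f (id (j : ℕ)) ω) = (fun ω (j : s) => f (j : ℕ) ω) := rfl
  rw [← this, h2]

end

theorem stmt_3
    {Ω : Type*} [MeasureSpace Ω] [IsProbabilityMeasure (ℙ : Measure Ω)]
    (A B : ℕ → Ω → ℝ) (X : Ω → ℝ)
    (hA : ∀ n, Measurable (A n)) (hB : ∀ n, Measurable (B n)) (hX : Measurable X)
    (hindep : iIndepFun (fun n ω => (A n ω, B n ω)) ℙ)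
    (hident : ∀ n, IdentDistrib (fun ω => (A n ω, B n ω)) (fun ω => (A 0 ω, B 0 ω)) ℙ ℙ)
    (hND1a : ℙ {ω | A 0 ω = 0} = 0) (hND1b : ℙ {ω | B 0 ω = 0} < 1)
    (hND2 : ∀ c : ℝ, ℙ {ω | B 0 ω + A 0 ω * c = c} < 1)
    (hXconv : ∀ᵐ ω ∂ℙ, Tendsto
      (fun n => ∑ k ∈ Finset.range n, (∏ i ∈ Finset.range k, A i ω) * B k ω)
      atTop (nhds (X ω)))
    (hA01 : ℙ {ω | A 0 ω ∈ Set.Ioc (0 : ℝ) 1} = 1)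
    (r : ℝ) (hr : 0 < r)
    (hXexp : ∫⁻ ω, ENNReal.ofReal (Real.exp (r * X ω)) ∂ℙ < ⊤) :
    ∫⁻ ω in {ω | A 0 ω = 1}, ENNReal.ofReal (Real.exp (r * B 0 ω)) ∂ℙ < 1 := by
  classical
  set pair : ℕ → Ω → ℝ × ℝ := fun k ω => (A k ω, B k ω) with hpair_def
  have hpairm : ∀ k, Measurable (pair k) := fun k => (hA k).prodMk (hB k)
  have hident' : ∀ k, IdentDistrib (pair k) (pair 0) ℙ ℙ := hident
  set T : ℕ → Ω → (ℕ → ℝ × ℝ) := fun n ω k => pair (n + k) ω with hT_def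
  have hTm : ∀ n, Measurable (T n) := fun n => measurable_pi_lambda _ fun k => hpairm (n + k)
  set F : ℕ → (ℕ → ℝ × ℝ) → ℝ :=
    fun m x => ∑ k ∈ Finset.range m, (∏ i ∈ Finset.range k, (x i).1) * (x k).2 with hF_def
  have hFm : ∀ m, Measurable (F m) := fun m =>
    Finset.measurable_sum _ fun k _ =>
      (Finset.measurable_prod _ fun i _ => (measurable_pi_apply i).fst).mul
        (measurable_pi_apply k).snd
  have hlaw : ∀ n, Measure.map (T n) ℙ = Measure.map (T 0) ℙ := by
    intro n
    have h0 : Measure.map (T 0) ℙ = Measure.map (fun ω (k : ℕ) => pair k ω) ℙ := by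
      congr 1
      funext ω k
      simp only [hT_def, Nat.zero_add]
    rw [h0]
    exact aux_shift_law hpairm hindep hident' n
  -- the limit function on sequence space
  have hconv0 : ∀ᵐ ω ∂ℙ, Tendsto (fun m => F m (T 0 ω)) atTop (nhds (X ω)) := by
    filter_upwards [hXconv] with ω hω
    have he : (fun m => F m (T 0 ω))
        = fun m => ∑ k ∈ Finset.range m, (∏ i ∈ Finset.range k, A i ω) * B k ω := by
      funext m
      simp only [hF_def, hT_def, hpair_def, Nat.zero_add]
    rw [he]
    exact hω
  have hexists : ∀ᵐ x ∂(Measure.map (T 0) ℙ), ∃ l, Tendsto (fun m => F m x) atTop (nhds l) := by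
    rw [ae_map_iff (hTm 0).aemeasurable (measurableSet_exists_tendsto hFm)]
    filter_upwards [hconv0] with ω hω using ⟨X ω, hω⟩
  obtain ⟨G, hGm, hGae⟩ := measurable_limit_of_tendsto_metrizable_ae
    (fun m => (hFm m).aemeasurable) hexists
  have hGn : ∀ n, ∀ᵐ ω ∂ℙ, Tendsto (fun m => F m (T n ω)) atTop (nhds (G (T n ω))) := by
    intro n
    have h' : ∀ᵐ y ∂(Measure.map (T n) ℙ), Tendsto (fun m => F m y) atTop (nhds (G y)) := by
      rw [hlaw n]
      exact hGae
    exact ae_of_ae_map (p := fun y => Tendsto (fun m => F m y) atTop (nhds (G y)))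
      (hTm n).aemeasurable h'
  -- A ∈ (0,1] a.s.
  have hA1ae : ∀ᵐ ω ∂ℙ, ∀ k, A k ω ∈ Set.Ioc (0:ℝ) 1 := by
    rw [ae_all_iff]
    intro k
    have hid : IdentDistrib (A k) (A 0) ℙ ℙ := (hident' k).comp measurable_fst
    have hk : ℙ {ω | A k ω ∈ Set.Ioc (0:ℝ) 1} = 1 := by
      have h1 : {ω | A k ω ∈ Set.Ioc (0:ℝ) 1} = A k ⁻¹' (Set.Ioc 0 1) := rfl
      have h2 : {ω | A 0 ω ∈ Set.Ioc (0:ℝ) 1} = A 0 ⁻¹' (Set.Ioc 0 1) := rfl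
      rw [h1, hid.measure_mem_eq measurableSet_Ioc, ← h2]
      exact hA01
    have hmeas : MeasurableSet {ω | A k ω ∈ Set.Ioc (0:ℝ) 1} := (hA k) measurableSet_Ioc
    rw [ae_iff]
    have hc : {ω | ¬ A k ω ∈ Set.Ioc (0:ℝ) 1} = {ω | A k ω ∈ Set.Ioc (0:ℝ) 1}ᶜ := rfl
    rw [hc, measure_compl hmeas (measure_ne_top _ _), hk, measure_univ, tsub_self]
  -- partial sums
  set P : ℕ → Ω → ℝ := fun m ω => ∑ k ∈ Finset.range m, (∏ i ∈ Finset.range k, A i ω) * B k ω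
    with hP_def
  have hXdec : ∀ n, ∀ᵐ ω ∂ℙ, X ω = P n ω + (∏ i ∈ Finset.range n, A i ω) * G (T n ω) := by
    intro n
    filter_upwards [hXconv, hGn n, hA1ae] with ω h1 h2 h3
    set c := ∏ i ∈ Finset.range n, A i ω with hc_def
    have halg : ∀ m, c * F m (T n ω) = P (n + m) ω - P n ω := by
      intro m
      have hsum : P (n + m) ω = P n ω
          + ∑ k ∈ Finset.range m, (∏ i ∈ Finset.range (n + k), A i ω) * B (n + k) ω :=
        Finset.sum_range_add (fun k => (∏ i ∈ Finset.range k, A i ω) * B k ω) n m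
      rw [hsum]
      rw [show F m (T n ω)
        = ∑ k ∈ Finset.range m, (∏ i ∈ Finset.range k, A (n+i) ω) * B (n+k) ω from rfl]
      rw [Finset.mul_sum]
      have hterm : ∀ k ∈ Finset.range m,
          c * ((∏ i ∈ Finset.range k, A (n+i) ω) * B (n+k) ω)
            = (∏ i ∈ Finset.range (n+k), A i ω) * B (n+k) ω := by
        intro k _
        rw [Finset.prod_range_add (fun i => A i ω) n k, ← hc_def]
        ring
      rw [Finset.sum_congr rfl hterm]
      ring
    have hshift : Tendsto (fun m => n + m) atTop atTop := by
      simpa [Nat.add_comm] using tendsto_add_atTop_nat n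
    have hlim2 : Tendsto (fun m => P (n + m) ω - P n ω) atTop (nhds (X ω - P n ω)) :=
      Tendsto.sub_const ((h1.comp hshift : _)) (P n ω)
    have hlim1 : Tendsto (fun m => P (n + m) ω - P n ω) atTop (nhds (c * G (T n ω))) := by
      have := h2.const_mul c
      rw [show (fun m => c * F m (T n ω)) = fun m => P (n + m) ω - P n ω from funext halg] at this
      exact this
    have huniq := tendsto_nhds_unique hlim1 hlim2
    rw [hc_def] at huniq
    linarith
  -- ψ and q
  set ψ : ℝ × ℝ → ENNReal :=
    fun p => Set.indicator {q : ℝ × ℝ | q.1 = 1} (fun q => ENNReal.ofReal (Real.exp (r * q.2))) p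
    with hψ_def
  have houter2 : Measurable fun q : ℝ × ℝ => ENNReal.ofReal (Real.exp (r * q.2)) :=
    ENNReal.measurable_ofReal.comp (Real.measurable_exp.comp (measurable_const.mul measurable_snd))
  have hset1 : MeasurableSet {q : ℝ × ℝ | q.1 = 1} := measurable_fst (measurableSet_singleton 1)
  have hψm : Measurable ψ := houter2.indicator hset1
  set q := ∫⁻ ω, ψ (pair 0 ω) ∂ℙ with hq_def
  have hgoal_eq : ∫⁻ ω in {ω | A 0 ω = 1}, ENNReal.ofReal (Real.exp (r * B 0 ω)) ∂ℙ = q := by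
    rw [hq_def, ← lintegral_indicator (show MeasurableSet {ω | A 0 ω = 1}
      from (hA 0) (measurableSet_singleton 1))]
    refine lintegral_congr fun ω => ?_
    by_cases h : A 0 ω = 1 <;>
      simp [hψ_def, hpair_def, Set.indicator_apply, Set.mem_setOf_eq, h]
  have hqk : ∀ k, ∫⁻ ω, ψ (pair k ω) ∂ℙ = q := by
    intro k
    rw [hq_def, ← lintegral_map hψm (hpairm k), ← lintegral_map hψm (hpairm 0),
      (hident' k).map_eq]
  -- W
  set W : ℕ → Ω → ENNReal := fun n ω => ∏ k ∈ Finset.range n, ψ (pair k ω) with hW_def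
  have hWm : ∀ n, Measurable (W n) := fun n =>
    Finset.measurable_prod _ fun k _ => hψm.comp (hpairm k)
  -- block independence
  have hcomap_meas : ∀ k, Measurable[MeasurableSpace.comap (pair k) Prod.instMeasurableSpace]
      (pair k) := fun k s hs => ⟨s, hs, rfl⟩
  have hblock : ∀ (n : ℕ) (H' : Ω → ENNReal),
      Measurable[⨆ k ∈ Set.Ici n, MeasurableSpace.comap (pair k) Prod.instMeasurableSpace] H' →
      IndepFun (W n) H' ℙ := by
    intro n H' hH'
    rw [IndepFun_iff_Indep]
    have hbig : Indep (⨆ k ∈ Set.Iio n, MeasurableSpace.comap (pair k) Prod.instMeasurableSpace)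
        (⨆ k ∈ Set.Ici n, MeasurableSpace.comap (pair k) Prod.instMeasurableSpace) ℙ := by
      apply indep_iSup_of_disjoint (fun k => (hpairm k).comap_le) hindep.iIndep
      exact Set.disjoint_left.mpr fun k hk hk' => (Set.mem_Iio.1 hk).not_ge (Set.mem_Ici.1 hk')
    refine indep_of_indep_of_le_left
      (indep_of_indep_of_le_right hbig (measurable_iff_comap_le.mp hH'))
      (measurable_iff_comap_le.mp ?_)
    show Measurable[⨆ k ∈ Set.Iio n, MeasurableSpace.comap (pair k) Prod.instMeasurableSpace]
      fun ω => ∏ k ∈ Finset.range n, ψ (pair k ω)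
    apply Finset.measurable_prod
    intro k hk
    exact hψm.comp ((hcomap_meas k).mono
      (le_biSup (fun j => MeasurableSpace.comap (pair j) Prod.instMeasurableSpace)
        (show (k:ℕ) ∈ Set.Iio n from Finset.mem_range.1 hk)) le_rfl)
  have hmem_Ici : ∀ n k : ℕ, (n + k : ℕ) ∈ Set.Ici n := fun n k => Nat.le_add_right n k
  have hTsub : ∀ n, Measurable[⨆ k ∈ Set.Ici n,
      MeasurableSpace.comap (pair k) Prod.instMeasurableSpace] (T n) := by
    intro n
    letI m' : MeasurableSpace Ω := ⨆ k ∈ Set.Ici n,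
      MeasurableSpace.comap (pair k) Prod.instMeasurableSpace
    exact measurable_pi_lambda (T n) (fun k => (hcomap_meas (n + k)).mono
      (le_biSup (fun j => MeasurableSpace.comap (pair j) Prod.instMeasurableSpace)
        (hmem_Ici n k)) le_rfl)
  -- ∫ W n = q ^ n
  have hWq : ∀ n, ∫⁻ ω, W n ω ∂ℙ = q ^ n := by
    intro n
    induction n with
    | zero => simp [hW_def]
    | succ n ih =>
      have hiWψ : IndepFun (W n) (fun ω => ψ (pair n ω)) ℙ :=
        hblock n _ (hψm.comp ((hcomap_meas n).mono
          (le_biSup (fun j => MeasurableSpace.comap (pair j) Prod.instMeasurableSpace)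
            (Set.mem_Ici.2 le_rfl)) le_rfl))
      have hprod := lintegral_mul_eq_lintegral_mul_lintegral_of_indepFun (hWm n)
        (hψm.comp (hpairm n)) hiWψ
      simp only [Pi.mul_apply, Function.comp_apply] at hprod
      calc ∫⁻ ω, W (n+1) ω ∂ℙ
          = ∫⁻ ω, W n ω * ψ (pair n ω) ∂ℙ := by
            refine lintegral_congr fun ω => ?_
            simp only [hW_def]
            exact Finset.prod_range_succ _ n
        _ = (∫⁻ ω, W n ω ∂ℙ) * ∫⁻ ω, ψ (pair n ω) ∂ℙ := hprod
        _ = q ^ n * q := by rw [ih, hqk n]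
        _ = q ^ (n + 1) := (pow_succ q n).symm
  -- M
  set M := ∫⁻ ω, ENNReal.ofReal (Real.exp (r * X ω)) ∂ℙ with hM_def
  have hsupp : (Function.support fun ω => ENNReal.ofReal (Real.exp (r * X ω))) = Set.univ :=
    Set.eq_univ_of_forall fun ω => (ENNReal.ofReal_pos.2 (Real.exp_pos _)).ne'
  have hXem : Measurable fun ω => ENNReal.ofReal (Real.exp (r * X ω)) :=
    ENNReal.measurable_ofReal.comp (Real.measurable_exp.comp (measurable_const.mul hX))
  have hM0 : M ≠ 0 := by
    rw [hM_def]
    refine ((lintegral_pos_iff_support hXem).2 ?_).ne'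
    rw [hsupp, measure_univ]
    exact zero_lt_one
  have hMt : M ≠ ⊤ := hXexp.ne
  -- H n and its integral
  have houterG : Measurable fun x : ℕ → ℝ × ℝ => ENNReal.ofReal (Real.exp (r * G x)) :=
    ENNReal.measurable_ofReal.comp (Real.measurable_exp.comp (measurable_const.mul hGm))
  have hHm : ∀ n, Measurable fun ω => ENNReal.ofReal (Real.exp (r * G (T n ω))) :=
    fun n => houterG.comp (hTm n)
  have hHM : ∀ n, ∫⁻ ω, ENNReal.ofReal (Real.exp (r * G (T n ω))) ∂ℙ = M := by
    intro n
    have e1 : ∫⁻ ω, ENNReal.ofReal (Real.exp (r * G (T n ω))) ∂ℙ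
        = ∫⁻ x, ENNReal.ofReal (Real.exp (r * G x)) ∂(Measure.map (T n) ℙ) :=
      (lintegral_map houterG (hTm n)).symm
    rw [e1, hlaw n, lintegral_map houterG (hTm 0), hM_def]
    apply lintegral_congr_ae
    filter_upwards [hXdec 0] with ω h0
    rw [hP_def] at h0
    simp only [Finset.range_zero, Finset.sum_empty, Finset.prod_empty, zero_add, one_mul] at h0
    rw [h0]
  -- E n
  set En : ℕ → Set Ω := fun n => ⋂ k ∈ Finset.range n, {ω | A k ω = 1} with hEn_def
  have hEnm : ∀ n, MeasurableSet (En n) := fun n =>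
    Finset.measurableSet_biInter _ fun k _ => (hA k) (measurableSet_singleton 1)
  have hWE : ∀ n, ∀ᵐ ω ∂ℙ, W n ω * ENNReal.ofReal (Real.exp (r * G (T n ω)))
      = Set.indicator (En n) (fun ω => ENNReal.ofReal (Real.exp (r * X ω))) ω := by
    intro n
    filter_upwards [hXdec n] with ω hdec
    by_cases hE : ∀ k < n, A k ω = 1
    · have hmem : ω ∈ En n := by
        rw [hEn_def]
        simp only [Set.mem_iInter, Set.mem_setOf_eq]
        exact fun k hk => hE k (Finset.mem_range.1 hk)
      have hψk : ∀ k ∈ Finset.range n, ψ (pair k ω) = ENNReal.ofReal (Real.exp (r * B k ω)) := by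
        intro k hk
        simp only [hψ_def]
        exact Set.indicator_of_mem (show pair k ω ∈ {q : ℝ × ℝ | q.1 = 1}
          from hE k (Finset.mem_range.1 hk)) _
      have hWval : W n ω = ENNReal.ofReal (Real.exp (r * ∑ k ∈ Finset.range n, B k ω)) := by
        simp only [hW_def]
        rw [Finset.prod_congr rfl hψk,
          ← ENNReal.ofReal_prod_of_nonneg (fun _ _ => (Real.exp_pos _).le)]
        congr 1
        rw [← Real.exp_sum, Finset.mul_sum]
      have hXval : X ω = (∑ k ∈ Finset.range n, B k ω) + G (T n ω) := by
        rw [hdec]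
        have h1 : P n ω = ∑ k ∈ Finset.range n, B k ω := by
          simp only [hP_def]
          apply Finset.sum_congr rfl
          intro k hk
          rw [Finset.prod_eq_one fun i hi =>
            hE i (lt_trans (Finset.mem_range.1 hi) (Finset.mem_range.1 hk)), one_mul]
        have h2 : ∏ i ∈ Finset.range n, A i ω = 1 :=
          Finset.prod_eq_one fun i hi => hE i (Finset.mem_range.1 hi)
        rw [h1, h2, one_mul]
      rw [hWval, Set.indicator_of_mem hmem, ← ENNReal.ofReal_mul (Real.exp_pos _).le,
        ← Real.exp_add, hXval, mul_add]
    · push_neg at hE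
      obtain ⟨k, hk, hAk⟩ := hE
      have hψ0 : ψ (pair k ω) = 0 := by
        simp only [hψ_def]
        exact Set.indicator_of_notMem (show pair k ω ∉ {q : ℝ × ℝ | q.1 = 1} from hAk) _
      have hW0 : W n ω = 0 := by
        simp only [hW_def]
        exact Finset.prod_eq_zero (Finset.mem_range.2 hk) hψ0
      have hnot : ω ∉ En n := by
        simp only [hEn_def]
        simp only [Set.mem_iInter, Set.mem_setOf_eq, not_forall]
        exact ⟨k, Finset.mem_range.2 hk, hAk⟩
      rw [hW0, zero_mul, Set.indicator_of_notMem hnot]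
  have hkey : ∀ n, ∫⁻ ω in En n, ENNReal.ofReal (Real.exp (r * X ω)) ∂ℙ = q ^ n * M := by
    intro n
    have hprod := lintegral_mul_eq_lintegral_mul_lintegral_of_indepFun (hWm n) (hHm n)
      (hblock n _ (houterG.comp (hTsub n)))
    simp only [Pi.mul_apply] at hprod
    rw [← lintegral_indicator (hEnm n), ← lintegral_congr_ae (hWE n), hprod, hWq n, hHM n]
  -- q ≤ 1
  have hq_le : q ≤ 1 := by
    have h1 : q ^ 1 * M ≤ 1 * M := by
      rw [← hkey 1, one_mul, hM_def]
      exact setLIntegral_le_lintegral _ _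
    rw [pow_one] at h1
    exact (ENNReal.mul_le_mul_iff_left hM0 hMt).1 h1
  -- q ≠ 1
  have hq_ne : q ≠ 1 := by
    intro hq1
    have hcompl : ∀ n, ℙ ((En n)ᶜ) = 0 := by
      intro n
      have hsplit := lintegral_add_compl (fun ω => ENNReal.ofReal (Real.exp (r * X ω))) (hEnm n)
        (μ := ℙ)
      rw [hkey n, hq1, one_pow, one_mul, ← hM_def] at hsplit
      have h0 : ∫⁻ ω in (En n)ᶜ, ENNReal.ofReal (Real.exp (r * X ω)) ∂ℙ = 0 := by
        have h := hsplit
        nth_rewrite 2 [← add_zero M] at h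
        exact (ENNReal.add_right_inj hMt).1 h
      by_contra hne
      have hpos : 0 < Measure.restrict ℙ ((En n)ᶜ)
          (Function.support fun ω => ENNReal.ofReal (Real.exp (r * X ω))) := by
        rw [hsupp, Measure.restrict_apply_univ]
        exact pos_iff_ne_zero.2 hne
      exact absurd h0 ((lintegral_pos_iff_support hXem).2 hpos).ne'
    have hAall : ∀ᵐ ω ∂ℙ, ∀ k, A k ω = 1 := by
      rw [ae_all_iff]
      intro k
      rw [ae_iff]
      refine measure_mono_null ?_ (hcompl (k + 1))
      intro ω hω
      simp only [hEn_def, Set.mem_compl_iff, Set.mem_iInter, Set.mem_setOf_eq, not_forall]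
      exact ⟨k, Finset.mem_range.2 (Nat.lt_succ_self k), hω⟩
    have hBtend : ∀ᵐ ω ∂ℙ, Tendsto (fun m => B m ω) atTop (nhds (0:ℝ)) := by
      filter_upwards [hXconv, hAall] with ω h1 h2
      have hsum : ∀ m, ∑ k ∈ Finset.range m, (∏ i ∈ Finset.range k, A i ω) * B k ω
          = ∑ k ∈ Finset.range m, B k ω := fun m =>
        Finset.sum_congr rfl fun k _ => by
          rw [Finset.prod_eq_one fun i _ => h2 i, one_mul]
      have h1' : Tendsto (fun m => ∑ k ∈ Finset.range m, B k ω) atTop (nhds (X ω)) := by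
        have := h1
        simp only [hsum] at this
        exact this
      have hs1 : Tendsto (fun m => ∑ k ∈ Finset.range (m + 1), B k ω) atTop (nhds (X ω)) :=
        h1'.comp (tendsto_add_atTop_nat 1)
      have hd := hs1.sub h1'
      simp only [Finset.sum_range_succ, add_sub_cancel_left, sub_self] at hd
      exact hd
    have hBmeas0 : ∀ ε : ℝ, 0 < ε → ℙ {ω | ε ≤ dist (B 0 ω) 0} = 0 := by
      intro ε hε
      have htim := tendstoInMeasure_of_tendsto_ae (μ := ℙ) (g := fun _ => (0:ℝ))
        (fun m => (hB m).aestronglyMeasurable) hBtend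
      have hmeasset : MeasurableSet {x : ℝ | ε ≤ dist x 0} :=
        measurableSet_le measurable_const (measurable_id.dist measurable_const)
      have hconst : ∀ m, ℙ {ω | ε ≤ dist (B m ω) 0} = ℙ {ω | ε ≤ dist (B 0 ω) 0} := by
        intro m
        have hid : IdentDistrib (B m) (B 0) ℙ ℙ := (hident' m).comp measurable_snd
        exact hid.measure_mem_eq hmeasset
      have ht := tendstoInMeasure_iff_dist.1 htim ε hε
      simp only [hconst] at ht
      exact tendsto_nhds_unique tendsto_const_nhds ht
    have hBne : ℙ {ω | B 0 ω ≠ 0} = 0 := by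
      have hsub : {ω | B 0 ω ≠ 0} ⊆ ⋃ m : ℕ, {ω | (1:ℝ)/(m+1) ≤ dist (B 0 ω) 0} := by
        intro ω hω
        obtain ⟨m, hm⟩ := exists_nat_one_div_lt (abs_pos.2 hω)
        refine Set.mem_iUnion.2 ⟨m, ?_⟩
        rw [Set.mem_setOf_eq, Real.dist_0_eq_abs]
        exact hm.le
      exact measure_mono_null hsub (measure_iUnion_null fun m => hBmeas0 _ (by positivity))
    have hB0 : ℙ {ω | B 0 ω = 0} = 1 := by
      have hcompl' : {ω | B 0 ω ≠ 0}ᶜ = {ω | B 0 ω = 0} := by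
        ext ω
        simp
      have hmeasne : MeasurableSet {ω | B 0 ω ≠ 0} :=
        ((hB 0) (measurableSet_singleton 0)).compl
      rw [← hcompl', measure_compl hmeasne (measure_ne_top _ _), hBne, measure_univ, tsub_zero]
    exact absurd hB0 hND1b.ne
  rw [hgoal_eq]
  exact lt_of_le_of_ne hq_le hq_ne
end

section
/- Suppose conditions (ND1) and (ND2) hold, the perpetuity X=∑_{k≥1}Π_{k-1}B_k converges a.s. (|X|<∞ a.s.), P{A=−1}>0, and let r>0. Then E[e^{rX}]<∞ if, and only if, E[e^{r|X|}]<∞. -/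
open MeasureTheory ProbabilityTheory Filter Finset
open scoped ENNReal NNReal

section Aux

variable {Ω : Type*} [MeasureSpace Ω] [IsProbabilityMeasure (ℙ : Measure Ω)]

lemma map_shift_eq_pi (V : ℕ → Ω → ℝ × ℝ) (hV : ∀ n, Measurable (V n))
    (hindep : iIndepFun V ℙ)
    (hident : ∀ n, IdentDistrib (V n) (V 0) ℙ ℙ) (n k : ℕ) :
    Measure.map (fun ω (i : Fin n) => V (i + k) ω) ℙ
      = Measure.pi (fun _ : Fin n => Measure.map (V 0) ℙ) := by
  classical
  have hmeas : Measurable (fun ω (i : Fin n) => V (i + k) ω) :=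
    measurable_pi_lambda _ fun i => hV _
  refine (Measure.pi_eq fun s hs => ?_).symm
  rw [Measure.map_apply hmeas (MeasurableSet.univ_pi hs)]
  set sets : ℕ → Set (ℝ × ℝ) := fun j => if h : j - k < n then s ⟨j - k, h⟩ else Set.univ
    with hsets
  have key : ∀ i : Fin n, sets (i + k) = s i := by
    intro i
    simp [hsets, Nat.add_sub_cancel, i.isLt]
  set S : Finset ℕ := (Finset.range n).image (· + k) with hS
  have hmem : ∀ j ∈ S, MeasurableSet (sets j) := by
    intro j hj
    rw [hS, Finset.mem_image] at hj
    obtain ⟨i, hi, rfl⟩ := hj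
    rw [Finset.mem_range] at hi
    rw [key ⟨i, hi⟩]
    exact hs _
  have hInt : ((fun ω (i : Fin n) => V (i + k) ω) ⁻¹' Set.pi Set.univ s)
      = ⋂ j ∈ S, V j ⁻¹' sets j := by
    ext ω
    simp only [Set.mem_preimage, Set.mem_pi, Set.mem_univ, forall_true_left,
      Set.mem_iInter, hS, Finset.mem_image, Finset.mem_range]
    constructor
    · rintro h j ⟨i, hi, rfl⟩
      have := h ⟨i, hi⟩
      rwa [key ⟨i, hi⟩]
    · intro h i
      have := h (i + k) ⟨i, i.isLt, rfl⟩
      rwa [key i] at this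
  have hprod := hindep.measure_inter_preimage_eq_mul (S := S) (sets := sets)
    (fun j hj => hmem j hj)
  rw [hInt, hprod, hS, Finset.prod_image (by intro x _ y _ h; simp only at h; omega)]
  rw [← Fin.prod_univ_eq_prod_range (fun i => ℙ (V (i + k) ⁻¹' sets (i + k))) n]
  refine Finset.prod_congr rfl fun i _ => ?_
  rw [key i, Measure.map_apply (hV 0) (hs i),
    ← (hident (i + k)).measure_mem_eq (hs i)]

omit [IsProbabilityMeasure (ℙ : Measure Ω)] in
lemma identDistrib_shift_sum (V : ℕ → Ω → ℝ × ℝ) (hV : ∀ n, Measurable (V n))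
    (hmap : ∀ n k : ℕ, Measure.map (fun ω (i : Fin n) => V (i + k) ω) ℙ
      = Measure.pi (fun _ : Fin n => Measure.map (V 0) ℙ)) (n : ℕ) :
    IdentDistrib
      (fun ω => ∑ j ∈ Finset.range n, (∏ i ∈ Finset.range j, (V (i + 1) ω).1) * (V (j + 1) ω).2)
      (fun ω => ∑ j ∈ Finset.range n, (∏ i ∈ Finset.range j, (V i ω).1) * (V j ω).2) ℙ ℙ := by
  classical
  set e : (Fin n → ℝ × ℝ) → ℕ → ℝ × ℝ :=
    fun v m => if h : m < n then v ⟨m, h⟩ else (0, 0) with he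
  have hemeas : Measurable e := by
    refine measurable_pi_lambda _ fun m => ?_
    by_cases h : m < n
    · simpa [he, h] using measurable_pi_apply (⟨m, h⟩ : Fin n)
    · simpa [he, h] using measurable_const
  set g : (Fin n → ℝ × ℝ) → ℝ :=
    fun v => ∑ j ∈ Finset.range n, (∏ i ∈ Finset.range j, (e v i).1) * (e v j).2 with hg
  have hgmeas : Measurable g := by
    refine Finset.measurable_sum _ fun j _ => Measurable.mul ?_ ?_
    · exact Finset.measurable_prod _ fun i _ =>
        (measurable_fst.comp ((measurable_pi_apply i).comp hemeas))
    · exact measurable_snd.comp ((measurable_pi_apply j).comp hemeas)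
  have hcomp : ∀ k : ℕ, (g ∘ fun ω (i : Fin n) => V (i + k) ω)
      = fun ω => ∑ j ∈ Finset.range n,
          (∏ i ∈ Finset.range j, (V (i + k) ω).1) * (V (j + k) ω).2 := by
    intro k
    funext ω
    simp only [Function.comp_apply, hg]
    refine Finset.sum_congr rfl fun j hj => ?_
    rw [Finset.mem_range] at hj
    have hej : e (fun i : Fin n => V (i + k) ω) j = V (j + k) ω := by simp [he, hj]
    rw [hej]
    congr 1
    refine Finset.prod_congr rfl fun i hi => ?_
    rw [Finset.mem_range] at hi
    have : e (fun i : Fin n => V (i + k) ω) i = V (i + k) ω := by simp [he, hi.trans hj]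
    rw [this]
  have hvecmeas : ∀ k : ℕ, Measurable (fun ω (i : Fin n) => V (i + k) ω) :=
    fun k => measurable_pi_lambda _ fun i => hV _
  refine ⟨?_, ?_, ?_⟩
  · exact (Finset.measurable_sum _ fun j _ => ((Finset.measurable_prod _ fun i _ =>
      (measurable_fst.comp (hV _))).mul (measurable_snd.comp (hV _)))).aemeasurable
  · exact (Finset.measurable_sum _ fun j _ => ((Finset.measurable_prod _ fun i _ =>
      (measurable_fst.comp (hV _))).mul (measurable_snd.comp (hV _)))).aemeasurable
  · calc Measure.map (fun ω => ∑ j ∈ Finset.range n,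
          (∏ i ∈ Finset.range j, (V (i + 1) ω).1) * (V (j + 1) ω).2) ℙ
        = Measure.map (g ∘ fun ω (i : Fin n) => V (i + 1) ω) ℙ := by rw [hcomp 1]
      _ = Measure.map g (Measure.map (fun ω (i : Fin n) => V (i + 1) ω) ℙ) :=
          (Measure.map_map hgmeas (hvecmeas 1)).symm
      _ = Measure.map g (Measure.map (fun ω (i : Fin n) => V (i + 0) ω) ℙ) := by
          rw [hmap n 1, hmap n 0]
      _ = Measure.map (g ∘ fun ω (i : Fin n) => V (i + 0) ω) ℙ :=
          Measure.map_map hgmeas (hvecmeas 0)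
      _ = Measure.map (fun ω => ∑ j ∈ Finset.range n,
          (∏ i ∈ Finset.range j, (V i ω).1) * (V j ω).2) ℙ := by
          rw [hcomp 0]; simp

lemma exists_tail_limit (V : ℕ → Ω → ℝ × ℝ) (hV : ∀ n, Measurable (V n))
    (hindep : iIndepFun V ℙ) (T : ℕ → Ω → ℝ)
    (hTm : ∀ n, Measurable[⨆ n ∈ (({0} : Set ℕ)ᶜ),
      MeasurableSpace.comap (V n) inferInstance] (T n))
    (hTconv : ∀ᵐ ω ∂ℙ, ∃ l, Tendsto (fun n => T n ω) atTop (nhds l))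
    (Φ : Ω → ℝ≥0∞) (hΦ : Measurable[MeasurableSpace.comap (V 0) inferInstance] Φ) :
    ∃ X₁' : Ω → ℝ, Measurable X₁'
      ∧ (∀ᵐ ω ∂ℙ, Tendsto (fun n => T n ω) atTop (nhds (X₁' ω)))
      ∧ ∀ u : ℝ → ℝ≥0∞, Measurable u → IndepFun Φ (fun ω => u (X₁' ω)) ℙ := by
  have hm' : (⨆ n ∈ (({0} : Set ℕ)ᶜ), MeasurableSpace.comap (V n) inferInstance)
      ≤ (MeasureSpace.toMeasurableSpace : MeasurableSpace Ω) :=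
    iSup₂_le fun n _ => (hV n).comap_le
  have hCmeas := @StronglyMeasurable.measurableSet_exists_tendsto ℕ Ω ℝ
    (⨆ n ∈ (({0} : Set ℕ)ᶜ), MeasurableSpace.comap (V n) inferInstance) _ _ atTop _ T _
    (fun n => (hTm n).stronglyMeasurable)
  obtain ⟨X₁', hX₁'meas, hX₁'trim⟩ := @measurable_limit_of_tendsto_metrizable_ae Ω ℝ
    (⨆ n ∈ (({0} : Set ℕ)ᶜ), MeasurableSpace.comap (V n) inferInstance) _ _ _ _ ℕ _
    (Measure.trim ℙ hm') T atTop _ (fun n => (hTm n).aemeasurable)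
    (by
      rw [ae_iff]
      show (Measure.trim ℙ hm') {ω | ∃ l, Tendsto (fun n => T n ω) atTop (nhds l)}ᶜ = 0
      rw [trim_measurableSet_eq hm' hCmeas.compl]
      exact ae_iff.mp hTconv)
  refine ⟨X₁', hX₁'meas.mono hm' le_rfl, ae_of_ae_trim hm' hX₁'trim, ?_⟩
  intro u hu
  have h0 := indep_biSup_compl (fun n => (hV n).comap_le) hindep.iIndep ({0} : Set ℕ)
  have hΦle : MeasurableSpace.comap Φ inferInstance
      ≤ ⨆ n ∈ ({0} : Set ℕ), MeasurableSpace.comap (V n) inferInstance :=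
    hΦ.comap_le.trans (le_iSup₂ (f := fun n (_ : n ∈ ({0} : Set ℕ)) =>
      MeasurableSpace.comap (V n) inferInstance) 0 rfl)
  have hule : MeasurableSpace.comap (fun ω => u (X₁' ω)) inferInstance
      ≤ ⨆ n ∈ (({0} : Set ℕ)ᶜ), MeasurableSpace.comap (V n) inferInstance :=
    (hu.comp hX₁'meas).comap_le
  exact indep_of_indep_of_le_right (indep_of_indep_of_le_left h0 hΦle) hule

end Aux

theorem stmt_4
    {Ω : Type*} [MeasureSpace Ω] [IsProbabilityMeasure (ℙ : Measure Ω)]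
    (A B : ℕ → Ω → ℝ) (X : Ω → ℝ)
    (hA : ∀ n, Measurable (A n)) (hB : ∀ n, Measurable (B n)) (hX : Measurable X)
    (hindep : iIndepFun (fun n ω => (A n ω, B n ω)) ℙ)
    (hident : ∀ n, IdentDistrib (fun ω => (A n ω, B n ω)) (fun ω => (A 0 ω, B 0 ω)) ℙ ℙ)
    (hND1a : ℙ {ω | A 0 ω = 0} = 0) (hND1b : ℙ {ω | B 0 ω = 0} < 1)
    (hND2 : ∀ c : ℝ, ℙ {ω | B 0 ω + A 0 ω * c = c} < 1)
    (hXconv : ∀ᵐ ω ∂ℙ, Tendsto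
      (fun n => ∑ k ∈ Finset.range n, (∏ i ∈ Finset.range k, A i ω) * B k ω)
      atTop (nhds (X ω)))
    (hAneg1 : 0 < ℙ {ω | A 0 ω = -1})
    (r : ℝ) (hr : 0 < r) :
    (∫⁻ ω, ENNReal.ofReal (Real.exp (r * X ω)) ∂ℙ < ⊤) ↔
      (∫⁻ ω, ENNReal.ofReal (Real.exp (r * |X ω|)) ∂ℙ < ⊤) := by
  classical
  constructor
  swap
  · intro h
    refine lt_of_le_of_lt (lintegral_mono fun ω => ?_) h
    exact ENNReal.ofReal_le_ofReal (Real.exp_le_exp.2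
      (mul_le_mul_of_nonneg_left (le_abs_self _) hr.le))
  intro hK
  set V : ℕ → Ω → ℝ × ℝ := fun n ω => (A n ω, B n ω) with hVdef
  have hVm : ∀ n, Measurable (V n) := fun n => (hA n).prodMk (hB n)
  have hmap := map_shift_eq_pi V hVm hindep hident
  set S : ℕ → Ω → ℝ := fun n ω => ∑ k ∈ Finset.range n, (∏ i ∈ Finset.range k, A i ω) * B k ω
    with hSdef
  set T : ℕ → Ω → ℝ :=
    fun n ω => ∑ k ∈ Finset.range n, (∏ i ∈ Finset.range k, A (i + 1) ω) * B (k + 1) ω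
    with hTdef
  have hSmeas : ∀ n, Measurable (S n) := fun n =>
    Finset.measurable_sum _ fun j _ =>
      (Finset.measurable_prod _ fun i _ => hA i).mul (hB j)
  have hTamb : ∀ n, Measurable (T n) := fun n =>
    Finset.measurable_sum _ fun j _ =>
      (Finset.measurable_prod _ fun i _ => hA _).mul (hB _)
  have hST : ∀ n ω, S (n + 1) ω = B 0 ω + A 0 ω * T n ω := by
    intro n ω
    simp only [hSdef, hTdef, Finset.sum_range_succ', Finset.prod_range_succ',
      Finset.prod_range_zero, one_mul, Finset.mul_sum]
    rw [add_comm]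
    congr 1
    exact Finset.sum_congr rfl fun j _ => by ring
  have hA0 : ∀ᵐ ω ∂ℙ, A 0 ω ≠ 0 := by
    rw [ae_iff]
    simpa using hND1a
  have hTconv : ∀ᵐ ω ∂ℙ, ∃ l, Tendsto (fun n => T n ω) atTop (nhds l) := by
    filter_upwards [hXconv, hA0] with ω hc ha
    have h1 : Tendsto (fun n => S (n + 1) ω) atTop (nhds (X ω)) :=
      hc.comp (tendsto_add_atTop_nat 1)
    refine ⟨(X ω - B 0 ω) / A 0 ω, ?_⟩
    have heq : (fun n => T n ω) = fun n => (S (n + 1) ω - B 0 ω) / A 0 ω := by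
      funext n; rw [hST n ω]; field_simp; ring
    rw [heq]
    exact (h1.sub tendsto_const_nhds).div_const _
  set Φ : Ω → ℝ≥0∞ :=
    fun ω => if A 0 ω = -1 then ENNReal.ofReal (Real.exp (r * B 0 ω)) else 0 with hΦdef
  have hΦ0 : Measurable[MeasurableSpace.comap (V 0) inferInstance] Φ := by
    have h : Measurable (fun p : ℝ × ℝ =>
        if p.1 = -1 then ENNReal.ofReal (Real.exp (r * p.2)) else 0) := by
      refine Measurable.ite ?_ ?_ measurable_const
      · exact measurable_fst (measurableSet_singleton (-1))
      · exact (Real.measurable_exp.comp (measurable_snd.const_mul r)).ennreal_ofReal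
    exact h.comp (Measurable.of_comap_le le_rfl)
  have hTm : ∀ n, Measurable[⨆ n ∈ (({0} : Set ℕ)ᶜ),
      MeasurableSpace.comap (V n) inferInstance] (T n) := by
    intro n
    have hVm' : ∀ i : ℕ, Measurable[⨆ n ∈ (({0} : Set ℕ)ᶜ),
        MeasurableSpace.comap (V n) inferInstance] (V (i + 1)) := fun i =>
      (Measurable.of_comap_le le_rfl).mono
        (le_iSup₂ (f := fun n (_ : n ∈ (({0} : Set ℕ)ᶜ)) =>
          MeasurableSpace.comap (V n) inferInstance) (i + 1) (by simp)) le_rfl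
    exact Finset.measurable_sum _ fun j _ =>
      (Finset.measurable_prod _ fun i _ => (measurable_fst.comp (hVm' i))).mul
        (measurable_snd.comp (hVm' j))
  obtain ⟨X₁', hX₁'amb, hX₁'t, hIndepU⟩ := exists_tail_limit V hVm hindep T hTm hTconv Φ hΦ0
  -- a.e. identity
  have hXid : ∀ᵐ ω ∂ℙ, X ω = B 0 ω + A 0 ω * X₁' ω := by
    filter_upwards [hXconv, hX₁'t] with ω hc ht
    have h1 : Tendsto (fun n => S (n + 1) ω) atTop (nhds (X ω)) :=
      hc.comp (tendsto_add_atTop_nat 1)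
    have h2 : Tendsto (fun n => S (n + 1) ω) atTop (nhds (B 0 ω + A 0 ω * X₁' ω)) := by
      simp only [hST]
      exact tendsto_const_nhds.add (tendsto_const_nhds.mul ht)
    exact tendsto_nhds_unique h1 h2
  -- law of X₁' equals law of X
  have hTS : ∀ n, IdentDistrib (T n) (S n) ℙ ℙ := fun n =>
    identDistrib_shift_sum V hVm hmap n
  have hlawrel : Measure.map X₁' ℙ = Measure.map X ℙ := by
    haveI := Measure.isProbabilityMeasure_map (μ := ℙ) hX₁'amb.aemeasurable
    refine ext_of_forall_lintegral_eq_of_IsFiniteMeasure fun f => ?_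
    have hfm : Measurable fun x : ℝ => ((f x : ℝ≥0) : ℝ≥0∞) :=
      measurable_coe_nnreal_ennreal.comp f.continuous.measurable
    rw [lintegral_map hfm hX₁'amb, lintegral_map hfm hX]
    have hbound : ∀ (g : Ω → ℝ) (ω : Ω), ((f (g ω) : ℝ≥0) : ℝ≥0∞) ≤ ((nndist f 0 : ℝ≥0) : ℝ≥0∞) :=
      fun g ω => by
        have h1 : nndist (f (g ω)) ((0 : BoundedContinuousFunction ℝ ℝ≥0) (g ω)) ≤ nndist f 0 :=
          BoundedContinuousFunction.nndist_coe_le_nndist _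
        rw [BoundedContinuousFunction.coe_zero, Pi.zero_apply,
          NNReal.nndist_zero_eq_val'] at h1
        exact ENNReal.coe_le_coe.2 h1
    have hfin : ∫⁻ _ : Ω, ((nndist f 0 : ℝ≥0) : ℝ≥0∞) ∂ℙ ≠ ⊤ := by
      rw [lintegral_const, measure_univ, mul_one]
      exact ENNReal.coe_ne_top
    have hlim1 : Tendsto (fun n => ∫⁻ ω, ((f (S n ω) : ℝ≥0) : ℝ≥0∞) ∂ℙ) atTop
        (nhds (∫⁻ ω, ((f (X ω) : ℝ≥0) : ℝ≥0∞) ∂ℙ)) := by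
      refine tendsto_lintegral_of_dominated_convergence _
        (fun n => hfm.comp (hSmeas n)) (fun n => Eventually.of_forall (hbound (S n))) hfin ?_
      filter_upwards [hXconv] with ω hc
      exact (ENNReal.tendsto_coe.2 ((f.continuous.tendsto (X ω)).comp hc))
    have hlim2 : Tendsto (fun n => ∫⁻ ω, ((f (T n ω) : ℝ≥0) : ℝ≥0∞) ∂ℙ) atTop
        (nhds (∫⁻ ω, ((f (X₁' ω) : ℝ≥0) : ℝ≥0∞) ∂ℙ)) := by
      refine tendsto_lintegral_of_dominated_convergence _
        (fun n => hfm.comp (hTamb n))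
        (fun n => Eventually.of_forall (hbound (T n))) hfin ?_
      filter_upwards [hX₁'t] with ω ht
      exact (ENNReal.tendsto_coe.2 ((f.continuous.tendsto (X₁' ω)).comp ht))
    have hn : ∀ n, ∫⁻ ω, ((f (T n ω) : ℝ≥0) : ℝ≥0∞) ∂ℙ
        = ∫⁻ ω, ((f (S n ω) : ℝ≥0) : ℝ≥0∞) ∂ℙ := fun n => ((hTS n).comp hfm).lintegral_eq
    have hlim1' : Tendsto (fun n => ∫⁻ ω, ((f (T n ω) : ℝ≥0) : ℝ≥0∞) ∂ℙ) atTop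
        (nhds (∫⁻ ω, ((f (X ω) : ℝ≥0) : ℝ≥0∞) ∂ℙ)) := by
      simpa only [hn] using hlim1
    exact tendsto_nhds_unique hlim2 hlim1'
  -- independence argument
  set Ψ : Ω → ℝ≥0∞ := fun ω => ENNReal.ofReal (Real.exp (-(r * X₁' ω))) with hΨdef
  have hg : Measurable fun x : ℝ => ENNReal.ofReal (Real.exp (-(r * x))) :=
    ((measurable_id.const_mul r).neg.exp).ennreal_ofReal
  have hΦamb : Measurable Φ := hΦ0.mono (hVm 0).comap_le le_rfl
  have hΨamb : Measurable Ψ := hg.comp hX₁'amb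
  have hIndep : IndepFun Φ Ψ ℙ := hIndepU _ hg
  have hmul := lintegral_mul_eq_lintegral_mul_lintegral_of_indepFun hΦamb hΨamb hIndep
  set c : ℝ≥0∞ := ∫⁻ ω, Φ ω ∂ℙ with hcdef
  set I : ℝ≥0∞ := ∫⁻ ω, Ψ ω ∂ℙ with hIdef
  have hboundΦΨ : ∀ᵐ ω ∂ℙ, (Φ * Ψ) ω ≤ ENNReal.ofReal (Real.exp (r * X ω)) := by
    filter_upwards [hXid] with ω hXω
    by_cases hA0ω : A 0 ω = -1
    · simp only [Pi.mul_apply, hΦdef, hΨdef, if_pos hA0ω]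
      rw [← ENNReal.ofReal_mul (Real.exp_nonneg _), ← Real.exp_add]
      refine le_of_eq ?_
      congr 2
      rw [hXω, hA0ω]
      ring
    · simp [hΦdef, hA0ω]
  have hcI_le : c * I ≤ ∫⁻ ω, ENNReal.ofReal (Real.exp (r * X ω)) ∂ℙ := by
    rw [← hmul]
    exact lintegral_mono_ae hboundΦΨ
  have hc0 : c ≠ 0 := by
    intro h
    have hz := (lintegral_eq_zero_iff hΦamb).1 h
    have hne : ∀ᵐ ω ∂ℙ, A 0 ω ≠ -1 := by
      filter_upwards [hz] with ω hω hA0ω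
      rw [hΦdef] at hω
      simp only [if_pos hA0ω] at hω
      exact absurd ((ENNReal.ofReal_eq_zero.1 hω).trans_lt (Real.exp_pos _)).false id
    have h2 := ae_iff.mp hne
    simp only [not_not] at h2
    exact absurd h2 hAneg1.ne'
  have hI0 : I ≠ 0 := by
    intro h
    have hz := (lintegral_eq_zero_iff hΨamb).1 h
    haveI : (ae (ℙ : Measure Ω)).NeBot := ae_neBot.2 (IsProbabilityMeasure.ne_zero ℙ)
    obtain ⟨ω, hω⟩ := hz.exists
    rw [hΨdef] at hω
    exact absurd ((ENNReal.ofReal_eq_zero.1 hω).trans_lt (Real.exp_pos _)).false id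
  have hIfin : I ≠ ⊤ := by
    intro hItop
    rw [hItop, ENNReal.mul_top hc0] at hcI_le
    exact hK.not_ge hcI_le
  have hInt2 : ∫⁻ ω, ENNReal.ofReal (Real.exp (-(r * X ω))) ∂ℙ = I := by
    calc ∫⁻ ω, ENNReal.ofReal (Real.exp (-(r * X ω))) ∂ℙ
        = ∫⁻ x, ENNReal.ofReal (Real.exp (-(r * x))) ∂(Measure.map X ℙ) :=
          (lintegral_map hg hX).symm
      _ = ∫⁻ x, ENNReal.ofReal (Real.exp (-(r * x))) ∂(Measure.map X₁' ℙ) := by rw [hlawrel]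
      _ = ∫⁻ ω, ENNReal.ofReal (Real.exp (-(r * X₁' ω))) ∂ℙ := lintegral_map hg hX₁'amb
      _ = I := rfl
  refine lt_of_le_of_lt (?_ : _ ≤ (∫⁻ ω, ENNReal.ofReal (Real.exp (r * X ω)) ∂ℙ)
      + ∫⁻ ω, ENNReal.ofReal (Real.exp (-(r * X ω))) ∂ℙ) ?_
  · rw [← lintegral_add_left ((hX.const_mul r).exp.ennreal_ofReal)
      (fun ω => ENNReal.ofReal (Real.exp (-(r * X ω))))]
    refine lintegral_mono fun ω => ?_
    rcases abs_cases (X ω) with ⟨h1, _⟩ | ⟨h1, _⟩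
    · rw [h1]; exact le_self_add
    · rw [h1]
      have : r * -X ω = -(r * X ω) := by ring
      rw [this]
      exact le_add_self
  · rw [hInt2]
    exact ENNReal.add_lt_top.2 ⟨hK, lt_top_iff_ne_top.2 hIfin⟩
end

section
/- Assume that A and B are independent, P{B=0}<1, P{A∈(0,1)}=1 (i.e., P{A∈(0,1]}=1 and P{A=1}=0), the perpetuity X=∑_{k≥1}Π_{k-1}B_k converges a.s., and let r>0. Then E[e^{rX*}]<∞ if, and only if, E[φ(rA)]<∞, where X*:=∑_{k≥1}Π_k B_{k+1}=A_1B_2+A_1A_2B_3+⋯ and φ(s):=E[e^{sB}]. -/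
open MeasureTheory ProbabilityTheory Filter Finset Real Topology
open scoped ENNReal

set_option linter.unusedVariables false
set_option linter.unusedSectionVars false
set_option maxHeartbeats 1000000

section Aux

variable {Ω : Type*} [MeasureSpace Ω] [IsProbabilityMeasure (ℙ : Measure Ω)]
  (A B : ℕ → Ω → ℝ)


/-- interleaved family -/
def Cf (p : ℕ × Bool) (ω : Ω) : ℝ := cond p.2 (B p.1 ω) (A p.1 ω)

theorem interleave_indep
    (hA : ∀ n, Measurable (A n)) (hB : ∀ n, Measurable (B n))
    (hindep : iIndepFun (fun n ω => (A n ω, B n ω)) ℙ)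
    (hident : ∀ n, IdentDistrib (fun ω => (A n ω, B n ω)) (fun ω => (A 0 ω, B 0 ω)) ℙ ℙ)
    (hindepAB : IndepFun (A 0) (B 0) ℙ) :
    iIndepFun (Cf A B) ℙ := by
  classical
  rw [iIndepFun_iff_measure_inter_preimage_eq_mul]
  intro S sets hsets
  set T : Finset ℕ := S.image Prod.fst with hT
  set E : ℕ → Set ℝ := fun n => if (n, false) ∈ S then sets (n, false) else Set.univ with hE
  set F : ℕ → Set ℝ := fun n => if (n, true) ∈ S then sets (n, true) else Set.univ with hF
  have hEm : ∀ n, MeasurableSet (E n) := by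
    intro n; by_cases h : (n, false) ∈ S <;> simp only [hE, h, if_true, if_false]
    · exact hsets _ h
    · exact MeasurableSet.univ
  have hFm : ∀ n, MeasurableSet (F n) := by
    intro n; by_cases h : (n, true) ∈ S <;> simp only [hF, h, if_true, if_false]
    · exact hsets _ h
    · exact MeasurableSet.univ
  have claim1 : (⋂ p ∈ S, Cf A B p ⁻¹' sets p)
      = ⋂ n ∈ T, (fun ω => (A n ω, B n ω)) ⁻¹' (E n ×ˢ F n) := by
    ext ω
    simp only [Set.mem_iInter, Set.mem_preimage, Set.mem_prod]
    constructor
    · intro h n hn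
      constructor
      · by_cases hf : (n, false) ∈ S
        · simpa [hE, hf, Cf] using h (n, false) hf
        · simp [hE, hf]
      · by_cases ht : (n, true) ∈ S
        · simpa [hF, ht, Cf] using h (n, true) ht
        · simp [hF, ht]
    · intro h p hp
      have hn : p.1 ∈ T := Finset.mem_image_of_mem Prod.fst hp
      rcases h p.1 hn with ⟨h1, h2⟩
      cases hb : p.2
      · have : p = (p.1, false) := by rw [← hb]
        rw [this] at hp ⊢
        simpa [Cf, hE, hp] using (by simpa [hE, hp] using h1)
      · have : p = (p.1, true) := by rw [← hb]
        rw [this] at hp ⊢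
        simpa [Cf, hF, hp] using (by simpa [hF, hp] using h2)
  have claim2 : ∀ n, ℙ ((fun ω => (A n ω, B n ω)) ⁻¹' (E n ×ˢ F n))
      = ℙ (A n ⁻¹' E n) * ℙ (B n ⁻¹' F n) := by
    intro n
    have h1 : ℙ ((fun ω => (A n ω, B n ω)) ⁻¹' (E n ×ˢ F n))
        = ℙ ((fun ω => (A 0 ω, B 0 ω)) ⁻¹' (E n ×ˢ F n)) :=
      (hident n).measure_mem_eq ((hEm n).prod (hFm n))
    have h2 : ((fun ω => (A 0 ω, B 0 ω)) ⁻¹' (E n ×ˢ F n)) = A 0 ⁻¹' E n ∩ B 0 ⁻¹' F n :=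
      Set.mk_preimage_prod _ _
    have h3 : ℙ (A 0 ⁻¹' E n ∩ B 0 ⁻¹' F n) = ℙ (A 0 ⁻¹' E n) * ℙ (B 0 ⁻¹' F n) :=
      hindepAB.measure_inter_preimage_eq_mul _ _ (hEm n) (hFm n)
    have hidA : ℙ (A n ⁻¹' E n) = ℙ (A 0 ⁻¹' E n) :=
      ((hident n).comp measurable_fst).measure_mem_eq (hEm n)
    have hidB : ℙ (B n ⁻¹' F n) = ℙ (B 0 ⁻¹' F n) :=
      ((hident n).comp measurable_snd).measure_mem_eq (hFm n)
    rw [h1, h2, h3, hidA, hidB]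
  have hpair := hindep.measure_inter_preimage_eq_mul T
    (sets := fun n => E n ×ˢ F n) (fun n _ => (hEm n).prod (hFm n))
  rw [claim1, hpair]
  -- now: ∏ n in T, ℙ (pair n ∈ E n ×ˢ F n) = ∏ p in S, ℙ (Cf p ⁻¹' sets p)
  have claim3 : ∀ n, ℙ (A n ⁻¹' E n) = (if (n, false) ∈ S then ℙ (Cf A B (n,false) ⁻¹' sets (n,false)) else 1) := by
    intro n
    by_cases h : (n, false) ∈ S
    · simp only [hE, h, if_true]; rfl
    · simp [hE, h]
  have claim4 : ∀ n, ℙ (B n ⁻¹' F n) = (if (n, true) ∈ S then ℙ (Cf A B (n,true) ⁻¹' sets (n,true)) else 1) := by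
    intro n
    by_cases h : (n, true) ∈ S
    · simp only [hF, h, if_true]; rfl
    · simp [hF, h]
  have hsub : S ⊆ T ×ˢ (Finset.univ : Finset Bool) := by
    intro p hp
    rw [Finset.mem_product]
    exact ⟨Finset.mem_image_of_mem Prod.fst hp, Finset.mem_univ _⟩
  have claim5 : ∏ p ∈ S, ℙ (Cf A B p ⁻¹' sets p)
      = ∏ p ∈ T ×ˢ (Finset.univ : Finset Bool),
          (if p ∈ S then ℙ (Cf A B p ⁻¹' sets p) else 1) := by
    rw [← Finset.prod_subset hsub (fun x _ hx => if_neg hx)]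
    exact Finset.prod_congr rfl fun x hx => (if_pos hx).symm
  rw [claim5, Finset.prod_product]
  refine Finset.prod_congr rfl fun n _ => ?_
  rw [claim2 n, claim3 n, claim4 n, Fintype.prod_bool]
  ring



theorem measCf (hA : ∀ n, Measurable (A n)) (hB : ∀ n, Measurable (B n)) (p : ℕ × Bool) :
    Measurable (Cf A B p) := by
  obtain ⟨n, b⟩ := p; cases b
  · exact hA n
  · exact hB n

theorem pair_lintegral
    (hA : ∀ n, Measurable (A n)) (hB : ∀ n, Measurable (B n))
    (hindep : iIndepFun (fun n ω => (A n ω, B n ω)) ℙ)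
    (hident : ∀ n, IdentDistrib (fun ω => (A n ω, B n ω)) (fun ω => (A 0 ω, B 0 ω)) ℙ ℙ)
    (hindepAB : IndepFun (A 0) (B 0) ℙ) (i j : ℕ)
    (f : ℝ × ℝ → ℝ≥0∞) (hf : Measurable f) :
    ∫⁻ ω, f (A i ω, B j ω) ∂ℙ = ∫⁻ ω, ∫⁻ ω', f (A 0 ω, B 0 ω') ∂ℙ ∂ℙ := by
  have hI := interleave_indep A B hA hB hindep hident hindepAB
  have hij : ((i, false) : ℕ × Bool) ≠ (j, true) := by simp
  have hIF : IndepFun (A i) (B j) ℙ := hI.indepFun hij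
  have hmap : (ℙ : Measure Ω).map (fun ω => (A i ω, B j ω)) = ((ℙ : Measure Ω).map (A 0)).prod ((ℙ : Measure Ω).map (B 0)) := by
    rw [(indepFun_iff_map_prod_eq_prod_map_map (hA i).aemeasurable (hB j).aemeasurable).mp hIF]
    have h1 : (ℙ : Measure Ω).map (A i) = (ℙ : Measure Ω).map (A 0) := ((hident i).comp measurable_fst).map_eq
    have h2 : (ℙ : Measure Ω).map (B j) = (ℙ : Measure Ω).map (B 0) := ((hident j).comp measurable_snd).map_eq
    rw [h1, h2]
  haveI : IsProbabilityMeasure ((ℙ : Measure Ω).map (A 0)) := Measure.isProbabilityMeasure_map (hA 0).aemeasurable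
  haveI : IsProbabilityMeasure ((ℙ : Measure Ω).map (B 0)) := Measure.isProbabilityMeasure_map (hB 0).aemeasurable
  have hg : Measurable fun x : ℝ => ∫⁻ ω', f (x, B 0 ω') ∂ℙ := by
    have : Measurable (Function.uncurry fun (x : ℝ) (ω' : Ω) => f (x, B 0 ω')) := by
      exact hf.comp (measurable_id.prodMap (hB 0))
    exact this.lintegral_prod_right
  calc ∫⁻ ω, f (A i ω, B j ω) ∂ℙ
      = ∫⁻ p, f p ∂((ℙ : Measure Ω).map (fun ω => (A i ω, B j ω))) :=
        (lintegral_map hf ((hA i).prodMk (hB j))).symm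
    _ = ∫⁻ p, f p ∂(((ℙ : Measure Ω).map (A 0)).prod ((ℙ : Measure Ω).map (B 0))) := by rw [hmap]
    _ = ∫⁻ x, ∫⁻ y, f (x, y) ∂((ℙ : Measure Ω).map (B 0)) ∂((ℙ : Measure Ω).map (A 0)) := lintegral_prod f hf.aemeasurable
    _ = ∫⁻ x, ∫⁻ ω', f (x, B 0 ω') ∂ℙ ∂((ℙ : Measure Ω).map (A 0)) := by
        refine lintegral_congr fun x => ?_
        exact lintegral_map (hf.comp measurable_prodMk_left) (hB 0)
    _ = ∫⁻ ω, ∫⁻ ω', f (A 0 ω, B 0 ω') ∂ℙ ∂ℙ := lintegral_map hg (hA 0)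

def Ms (s : Set (ℕ × Bool)) : MeasurableSpace Ω :=
  ⨆ p ∈ s, MeasurableSpace.comap (Cf A B p) inferInstance

theorem measCf_Ms' {s : Set (ℕ × Bool)} {p : ℕ × Bool} (hp : p ∈ s) :
    Measurable[Ms A B s] (Cf A B p) :=
  Measurable.of_comap_le
    (le_biSup (f := fun p => MeasurableSpace.comap (Cf A B p) inferInstance) hp)

theorem factor
    (hA : ∀ n, Measurable (A n)) (hB : ∀ n, Measurable (B n))
    (hindep : iIndepFun (fun n ω => (A n ω, B n ω)) ℙ)
    (hident : ∀ n, IdentDistrib (fun ω => (A n ω, B n ω)) (fun ω => (A 0 ω, B 0 ω)) ℙ ℙ)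
    (hindepAB : IndepFun (A 0) (B 0) ℙ) (s : Set (ℕ × Bool)) (u v : Ω → ℝ≥0∞)
    (hu : Measurable[Ms A B s] u) (hv : Measurable[Ms A B sᶜ] v) :
    ∫⁻ ω, u ω * v ω ∂ℙ = (∫⁻ ω, u ω ∂ℙ) * ∫⁻ ω, v ω ∂ℙ := by
  have hI := interleave_indep A B hA hB hindep hident hindepAB
  have hle : ∀ p : ℕ × Bool,
      MeasurableSpace.comap (Cf A B p) inferInstance ≤ (inferInstance : MeasurableSpace Ω) :=
    fun p => (measCf A B hA hB p).comap_le
  have hind := indep_biSup_compl hle hI.iIndep s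
  exact lintegral_mul_eq_lintegral_mul_lintegral_of_independent_measurableSpace
    (iSup₂_le fun p _ => hle p) (iSup₂_le fun p _ => hle p) hind hu hv

def Spart (n : ℕ) (ω : Ω) : ℝ :=
  ∑ k ∈ Finset.range n, (∏ i ∈ Finset.range (k + 1), A i ω) * B (k + 1) ω

def Tpart (n : ℕ) (ω : Ω) : ℝ :=
  ∑ k ∈ Finset.range n, (∏ i ∈ Finset.range (k + 1), A (i + 1) ω) * B (k + 2) ω

omit [IsProbabilityMeasure (ℙ : Measure Ω)] in
theorem Spart_succ (n : ℕ) (ω : Ω) :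
    Spart A B (n + 1) ω = A 0 ω * B 1 ω + A 0 ω * Tpart A B n ω := by
  unfold Spart Tpart
  have h1 : ∀ k, (∏ i ∈ Finset.range (k + 1 + 1), A i ω) * B (k + 1 + 1) ω
      = A 0 ω * ((∏ i ∈ Finset.range (k + 1), A (i + 1) ω) * B (k + 2) ω) := by
    intro k; rw [Finset.prod_range_succ']; ring
  rw [Finset.sum_range_succ', Finset.mul_sum]
  simp only [h1]
  norm_num [Finset.prod_range_one]
  ring

omit [IsProbabilityMeasure (ℙ : Measure Ω)] in
theorem Tpart_meas (hA : ∀ n, Measurable (A n)) (hB : ∀ n, Measurable (B n)) (n : ℕ) :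
    Measurable (Tpart A B n) := by
  apply Finset.measurable_sum
  intro k _
  exact (Finset.measurable_prod _ fun i _ => hA (i + 1)).mul (hB (k + 2))

theorem forward_dir
    (Xstar : Ω → ℝ) (hXs : Measurable Xstar)
    (hA : ∀ n, Measurable (A n)) (hB : ∀ n, Measurable (B n))
    (hindep : iIndepFun (fun n ω => (A n ω, B n ω)) ℙ)
    (hident : ∀ n, IdentDistrib (fun ω => (A n ω, B n ω)) (fun ω => (A 0 ω, B 0 ω)) ℙ ℙ)
    (hindepAB : IndepFun (A 0) (B 0) ℙ)
    (hXsconv : ∀ᵐ ω ∂ℙ, Tendsto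
      (fun n => ∑ k ∈ Finset.range n, (∏ i ∈ Finset.range (k + 1), A i ω) * B (k + 1) ω)
      atTop (nhds (Xstar ω)))
    (hA01 : ℙ {ω | A 0 ω ∈ Set.Ioo (0 : ℝ) 1} = 1)
    (r : ℝ) (hr : 0 < r)
    (hfin : ∫⁻ ω, ENNReal.ofReal (Real.exp (r * Xstar ω)) ∂ℙ < ⊤) :
    (∫⁻ ω, (∫⁻ ω', ENNReal.ofReal (Real.exp ((r * A 0 ω) * B 0 ω')) ∂ℙ) ∂ℙ < ⊤) := by
  classical
  -- the events E M
  set E : ℕ → Set Ω := fun M => ⋃ N, ⋂ n, {ω | -(M : ℝ) < Tpart A B (N + n) ω} with hEdef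
  have hTmeas := Tpart_meas A B hA hB
  have hEmeas : ∀ M, MeasurableSet (E M) := by
    intro M
    exact MeasurableSet.iUnion fun N => MeasurableSet.iInter fun n =>
      measurableSet_lt measurable_const (hTmeas (N + n))
  -- a.e. facts
  have hA0as : ∀ᵐ ω ∂ℙ, A 0 ω ∈ Set.Ioo (0 : ℝ) 1 := by
    rw [ae_iff]
    exact (prob_compl_eq_zero_iff ((hA 0) measurableSet_Ioo)).mpr hA01
  -- Tendsto of Tpart
  have hTlim : ∀ᵐ ω ∂ℙ, Tendsto (fun n => Tpart A B n ω) atTop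
      (nhds ((Xstar ω - A 0 ω * B 1 ω) / A 0 ω)) ∧ A 0 ω ∈ Set.Ioo (0:ℝ) 1 ∧
      Xstar ω = A 0 ω * B 1 ω + A 0 ω * ((Xstar ω - A 0 ω * B 1 ω) / A 0 ω) := by
    filter_upwards [hXsconv, hA0as] with ω hconv hA0
    have hA0ne : A 0 ω ≠ 0 := ne_of_gt hA0.1
    have hS1 : Tendsto (fun n => Spart A B (n + 1) ω) atTop (nhds (Xstar ω)) := by
      have : Tendsto (fun n : ℕ => n + 1) atTop atTop := tendsto_add_atTop_nat 1
      exact hconv.comp this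
    have hTeq : ∀ n, Tpart A B n ω = (Spart A B (n + 1) ω - A 0 ω * B 1 ω) / A 0 ω := by
      intro n
      rw [Spart_succ A B n ω]
      field_simp
      ring
    have : Tendsto (fun n => (Spart A B (n + 1) ω - A 0 ω * B 1 ω) / A 0 ω) atTop
        (nhds ((Xstar ω - A 0 ω * B 1 ω) / A 0 ω)) := (hS1.sub_const _).div_const _
    refine ⟨by rw [funext hTeq]; exact this, hA0, by field_simp; ring⟩
  -- the union of the E M has full measure
  have hEfull : ∀ᵐ ω ∂ℙ, ω ∈ ⋃ M, E M := by
    filter_upwards [hTlim] with ω ⟨hT, hA0, _⟩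
    set y := (Xstar ω - A 0 ω * B 1 ω) / A 0 ω with hy
    set M := ⌈1 - y⌉₊ with hM
    have hMy : -(M : ℝ) ≤ y - 1 := by
      have := Nat.le_ceil (1 - y)
      linarith
    have hev : ∀ᶠ n in atTop, y - 1 < Tpart A B n ω := by
      have : ∀ᶠ z in nhds y, y - 1 < z := eventually_gt_nhds (by linarith)
      exact hT.eventually this
    rcases eventually_atTop.mp hev with ⟨N, hN⟩
    refine Set.mem_iUnion.mpr ⟨M, Set.mem_iUnion.mpr ⟨N, ?_⟩⟩
    refine Set.mem_iInter.mpr fun n => ?_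
    have := hN (N + n) (Nat.le_add_right N n)
    exact lt_of_le_of_lt hMy this
  have hExists : ∃ M, ℙ (E M) ≠ 0 := by
    by_contra h
    push_neg at h
    have h0 : ℙ (⋃ M, E M) = 0 := measure_iUnion_null h
    have h1 : ℙ (⋃ M, E M) = 1 := by
      have heq : (⋃ M, E M) =ᵐ[ℙ] (Set.univ : Set Ω) := by
        rw [Filter.eventuallyEq_set]
        filter_upwards [hEfull] with ω hω
        simp [hω]
      rw [measure_congr heq, measure_univ]
    rw [h0] at h1
    exact zero_ne_one h1
  obtain ⟨M, hM0⟩ := hExists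
  -- the two functions
  set u : Ω → ℝ≥0∞ := fun ω => ENNReal.ofReal (Real.exp (r * (A 0 ω * B 1 ω))) with hu_def
  set v : Ω → ℝ≥0∞ := (E M).indicator (fun _ => 1) with hv_def
  -- pointwise bound
  have hbound : ∀ᵐ ω ∂ℙ, u ω * v ω ≤
      ENNReal.ofReal (Real.exp (r * Xstar ω)) * ENNReal.ofReal (Real.exp (r * M)) := by
    filter_upwards [hTlim] with ω ⟨hT, hA0, hXid⟩
    set y := (Xstar ω - A 0 ω * B 1 ω) / A 0 ω with hy
    by_cases hω : ω ∈ E M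
    · have hv1 : v ω = 1 := by simp [hv_def, hω]
      rw [hv1, mul_one, hu_def]
      rw [← ENNReal.ofReal_mul (Real.exp_nonneg _), ← Real.exp_add]
      apply ENNReal.ofReal_le_ofReal
      apply Real.exp_le_exp.mpr
      -- need r * (A 0 ω * B 1 ω) ≤ r * Xstar ω + r * M
      obtain ⟨N, hN⟩ := Set.mem_iUnion.mp hω
      have hyM : -(M : ℝ) ≤ y := by
        apply ge_of_tendsto hT
        rw [eventually_atTop]
        refine ⟨N, fun m hm => ?_⟩
        have h2 := Set.mem_iInter.mp hN (m - N)
        rw [Nat.add_sub_cancel' hm] at h2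
        exact le_of_lt h2
      have h2 : (0:ℝ) ≤ A 0 ω * y + M := by nlinarith [hA0.1, hA0.2, Nat.cast_nonneg (α := ℝ) M]
      have h3 : (0:ℝ) ≤ r * (A 0 ω * y + M) := mul_nonneg hr.le h2
      rw [hXid]
      nlinarith [h3]
    · have hv0 : v ω = 0 := by simp [hv_def, hω]
      rw [hv0, mul_zero]
      exact zero_le
  -- measurability over sub-sigma-algebras
  set s : Set (ℕ × Bool) := {(0, false), (1, true)} with hs_def
  have hu' : Measurable[Ms A B s] u := by
    have hA0m : Measurable[Ms A B s] (A 0) :=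
      measCf_Ms' A B (show ((0, false) : ℕ × Bool) ∈ s by simp [hs_def])
    have hB1m : Measurable[Ms A B s] (B 1) :=
      measCf_Ms' A B (show ((1, true) : ℕ × Bool) ∈ s by simp [hs_def])
    exact ENNReal.measurable_ofReal.comp
      (Real.measurable_exp.comp (measurable_const.mul (hA0m.mul hB1m)))
  have hv' : Measurable[Ms A B sᶜ] v := by
    have hTm : ∀ n, Measurable[Ms A B sᶜ] (Tpart A B n) := by
      intro n
      apply Finset.measurable_sum
      intro k _
      refine Measurable.mul (Finset.measurable_prod _ fun i _ => ?_) ?_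
      · exact measCf_Ms' A B (show ((i + 1, false) : ℕ × Bool) ∈ sᶜ by simp [hs_def])
      · exact measCf_Ms' A B (show ((k + 2, true) : ℕ × Bool) ∈ sᶜ by simp [hs_def])
    have hEs : MeasurableSet[Ms A B sᶜ] (E M) := by
      exact MeasurableSet.iUnion fun N => MeasurableSet.iInter fun n =>
        measurableSet_lt measurable_const (hTm (N + n))
    exact measurable_const.indicator hEs
  have hfact : ∫⁻ ω, u ω * v ω ∂ℙ = (∫⁻ ω, u ω ∂ℙ) * ℙ (E M) := by
    rw [factor A B hA hB hindep hident hindepAB s u v hu' hv']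
    congr 1
    rw [hv_def]
    exact lintegral_indicator_one (hEmeas M)
  have humeas : Measurable u :=
    ENNReal.measurable_ofReal.comp
      (Real.measurable_exp.comp (measurable_const.mul ((hA 0).mul (hB 1))))
  have hXmeas : Measurable fun ω => ENNReal.ofReal (Real.exp (r * Xstar ω)) :=
    ENNReal.measurable_ofReal.comp (Real.measurable_exp.comp (measurable_const.mul hXs))
  have hineq : (∫⁻ ω, u ω ∂ℙ) * ℙ (E M)
      ≤ (∫⁻ ω, ENNReal.ofReal (Real.exp (r * Xstar ω)) ∂ℙ) * ENNReal.ofReal (Real.exp (r * M)) := by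
    rw [← hfact, ← lintegral_mul_const _ hXmeas]
    exact lintegral_mono_ae hbound
  have hufin : (∫⁻ ω, u ω ∂ℙ) ≠ ⊤ := by
    intro htop
    rw [htop, ENNReal.top_mul hM0] at hineq
    exact (ENNReal.mul_ne_top hfin.ne ENNReal.ofReal_ne_top)
      (top_le_iff.mp hineq)
  -- transfer to the double integral
  have hfmeas : Measurable fun p : ℝ × ℝ => ENNReal.ofReal (Real.exp (r * (p.1 * p.2))) :=
    ENNReal.measurable_ofReal.comp
      (Real.measurable_exp.comp (measurable_const.mul (measurable_fst.mul measurable_snd)))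
  have hpl := pair_lintegral A B hA hB hindep hident hindepAB 0 1
    (fun p : ℝ × ℝ => ENNReal.ofReal (Real.exp (r * (p.1 * p.2)))) hfmeas
  have hgoal_eq : (∫⁻ ω, (∫⁻ ω', ENNReal.ofReal (Real.exp ((r * A 0 ω) * B 0 ω')) ∂ℙ) ∂ℙ)
      = ∫⁻ ω, u ω ∂ℙ := by
    rw [hpl]
    refine lintegral_congr fun ω => lintegral_congr fun ω' => ?_
    rw [mul_assoc]
  rw [hgoal_eq]
  exact lt_top_iff_ne_top.mpr hufin

/-- weight function -/
noncomputable def Wf (r : ℝ) (m : ℕ) (ω : Ω) : ℝ := r * A m ω * max (B (m + 1) ω) 0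

/-- decay factor -/
noncomputable def Pc (c : ℝ) (j k : ℕ) (ω : Ω) : ℝ :=
  ∏ i ∈ Finset.range k, (if A (j + i) ω ≤ c then c else 1)

/-- the exponent -/
noncomputable def Ssum (r c : ℝ) (j n : ℕ) (ω : Ω) : ℝ :=
  ∑ k ∈ Finset.range n, Pc A c j k ω * Wf A B r (j + k) ω

noncomputable def fA (r c x : ℝ) (p : ℝ × ℝ) : ℝ≥0∞ :=
  if c < p.1 then ENNReal.ofReal (Real.exp (x * (r * p.1 * max p.2 0))) else 0

noncomputable def fB (r c x : ℝ) (p : ℝ × ℝ) : ℝ≥0∞ :=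
  if c < p.1 then 0 else ENNReal.ofReal (Real.exp (x * (r * p.1 * max p.2 0)))

omit [IsProbabilityMeasure (ℙ : Measure Ω)] in
theorem fA_meas (r c x : ℝ) : Measurable (fA r c x) := by
  apply Measurable.ite (measurableSet_lt measurable_const measurable_fst)
  · exact ENNReal.measurable_ofReal.comp (Real.measurable_exp.comp
      (measurable_const.mul ((measurable_const.mul measurable_fst).mul
        (measurable_snd.max measurable_const))))
  · exact measurable_const

omit [IsProbabilityMeasure (ℙ : Measure Ω)] in
theorem fB_meas (r c x : ℝ) : Measurable (fB r c x) := by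
  apply Measurable.ite (measurableSet_lt measurable_const measurable_fst)
  · exact measurable_const
  · exact ENNReal.measurable_ofReal.comp (Real.measurable_exp.comp
      (measurable_const.mul ((measurable_const.mul measurable_fst).mul
        (measurable_snd.max measurable_const))))

omit [IsProbabilityMeasure (ℙ : Measure Ω)] in
theorem Pc_succ (c : ℝ) (j k : ℕ) (ω : Ω) :
    Pc A c j (k + 1) ω = (if A j ω ≤ c then c else 1) * Pc A c (j + 1) k ω := by
  unfold Pc
  rw [Finset.prod_range_succ', Nat.add_zero, mul_comm]
  congr 1
  refine Finset.prod_congr rfl fun i _ => ?_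
  rw [show j + (i + 1) = j + 1 + i from by omega]

omit [IsProbabilityMeasure (ℙ : Measure Ω)] in
theorem Ssum_succ (r c : ℝ) (j n : ℕ) (ω : Ω) :
    Ssum A B r c j (n + 1) ω
      = Wf A B r j ω + (if A j ω ≤ c then c else 1) * Ssum A B r c (j + 1) n ω := by
  unfold Ssum
  rw [Finset.sum_range_succ', Finset.mul_sum]
  have h0 : Pc A c j 0 ω * Wf A B r (j + 0) ω = Wf A B r j ω := by
    unfold Pc; simp
  rw [h0, add_comm]
  congr 1
  refine Finset.sum_congr rfl fun k _ => ?_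
  rw [Pc_succ]
  have h : j + (k + 1) = (j + 1) + k := by omega
  rw [h]
  ring

omit [IsProbabilityMeasure (ℙ : Measure Ω)] in
theorem Ssum_meas (hA : ∀ n, Measurable (A n)) (hB : ∀ n, Measurable (B n))
    (r c : ℝ) (j n : ℕ) : Measurable (Ssum A B r c j n) := by
  apply Finset.measurable_sum
  intro k _
  apply Measurable.mul
  · apply Finset.measurable_prod
    intro i _
    exact Measurable.ite (measurableSet_le (hA _) measurable_const)
      measurable_const measurable_const
  · exact (measurable_const.mul (hA _)).mul ((hB _).max measurable_const)

theorem Ssum_measMs (c r : ℝ) (j n : ℕ) :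
    Measurable[Ms A B ({(j, false), (j + 1, true)} : Set (ℕ × Bool))ᶜ] (Ssum A B r c (j+1) n) := by
  have hmemA : ∀ m : ℕ, (j + 1) ≤ m →
      ((m, false) : ℕ × Bool) ∈ ({(j, false), (j + 1, true)} : Set (ℕ × Bool))ᶜ := by
    intro m hm
    have hne : m ≠ j := by omega
    simp [Prod.mk.injEq, hne]
  have hmemB : ∀ m : ℕ, (j + 2) ≤ m →
      ((m, true) : ℕ × Bool) ∈ ({(j, false), (j + 1, true)} : Set (ℕ × Bool))ᶜ := by
    intro m hm
    have hne : m ≠ j + 1 := by omega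
    simp [Prod.mk.injEq, hne]
  have hAm : ∀ m : ℕ, (j + 1) ≤ m →
      Measurable[Ms A B ({(j, false), (j + 1, true)} : Set (ℕ × Bool))ᶜ] (A m) :=
    fun m hm => measCf_Ms' A B (hmemA m hm)
  have hBm : ∀ m : ℕ, (j + 2) ≤ m →
      Measurable[Ms A B ({(j, false), (j + 1, true)} : Set (ℕ × Bool))ᶜ] (B m) :=
    fun m hm => measCf_Ms' A B (hmemB m hm)
  apply Finset.measurable_sum
  intro k _
  apply Measurable.mul
  · apply Finset.measurable_prod
    intro i _
    exact Measurable.ite (measurableSet_le (hAm _ (by omega)) measurable_const)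
      measurable_const measurable_const
  · exact (measurable_const.mul (hAm _ (by omega))).mul
      ((hBm _ (by omega)).max measurable_const)

theorem main_ind
    (hA : ∀ n, Measurable (A n)) (hB : ∀ n, Measurable (B n))
    (hindep : iIndepFun (fun n ω => (A n ω, B n ω)) ℙ)
    (hident : ∀ n, IdentDistrib (fun ω => (A n ω, B n ω)) (fun ω => (A 0 ω, B 0 ω)) ℙ ℙ)
    (hindepAB : IndepFun (A 0) (B 0) ℙ)
    (r c K : ℝ) (hc0 : 0 < c) (hc1 : c < 1) (hK0 : 0 ≤ K)
    (hK : ∀ x : ℝ, 0 ≤ x → x ≤ 1 →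
      (∫⁻ ω, ∫⁻ ω', fA r c x (A 0 ω, B 0 ω') ∂ℙ ∂ℙ) * ENNReal.ofReal (Real.exp (K * x))
        + (∫⁻ ω, ∫⁻ ω', fB r c x (A 0 ω, B 0 ω') ∂ℙ ∂ℙ) * ENNReal.ofReal (Real.exp (K * (c * x)))
        ≤ ENNReal.ofReal (Real.exp (K * x))) :
    ∀ n j (x : ℝ), 0 ≤ x → x ≤ 1 →
      ∫⁻ ω, ENNReal.ofReal (Real.exp (x * Ssum A B r c j n ω)) ∂ℙ
        ≤ ENNReal.ofReal (Real.exp (K * x)) := by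
  intro n
  induction n with
  | zero =>
    intro j x hx0 hx1
    have h0 : ∀ ω : Ω, ENNReal.ofReal (Real.exp (x * Ssum A B r c j 0 ω)) = 1 := by
      intro ω
      simp [Ssum]
    rw [lintegral_congr h0, lintegral_one, measure_univ, ← ENNReal.ofReal_one]
    exact ENNReal.ofReal_le_ofReal (Real.one_le_exp (mul_nonneg hK0 hx0))
  | succ n ih =>
    intro j x hx0 hx1
    have hpt : ∀ ω, ENNReal.ofReal (Real.exp (x * Ssum A B r c j (n + 1) ω))
        = fA r c x (A j ω, B (j + 1) ω)
            * ENNReal.ofReal (Real.exp (x * Ssum A B r c (j + 1) n ω))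
          + fB r c x (A j ω, B (j + 1) ω)
            * ENNReal.ofReal (Real.exp ((c * x) * Ssum A B r c (j + 1) n ω)) := by
      intro ω
      rw [Ssum_succ]
      by_cases h : A j ω ≤ c
      · have hnc : ¬ c < A j ω := not_lt.mpr h
        rw [if_pos h]
        unfold fA fB
        simp only [if_neg hnc]
        rw [zero_mul, zero_add, ← ENNReal.ofReal_mul (Real.exp_nonneg _), ← Real.exp_add]
        congr 1
        unfold Wf
        ring
      · have hc' : c < A j ω := not_le.mp h
        rw [if_neg h]
        unfold fA fB
        simp only [if_pos hc']
        rw [zero_mul, add_zero, ← ENNReal.ofReal_mul (Real.exp_nonneg _), ← Real.exp_add]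
        congr 1
        unfold Wf
        ring
    rw [lintegral_congr hpt]
    -- measurability
    have hSm : ∀ (y : ℝ), Measurable fun ω =>
        ENNReal.ofReal (Real.exp (y * Ssum A B r c (j + 1) n ω)) :=
      fun y => ENNReal.measurable_ofReal.comp (Real.measurable_exp.comp
        (measurable_const.mul (Ssum_meas A B hA hB r c (j + 1) n)))
    have hpm : Measurable fun ω => (A j ω, B (j + 1) ω) := (hA j).prodMk (hB (j + 1))
    have hm1 : Measurable fun ω => fA r c x (A j ω, B (j + 1) ω)
        * ENNReal.ofReal (Real.exp (x * Ssum A B r c (j + 1) n ω)) :=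
      ((fA_meas r c x).comp hpm).mul (hSm x)
    rw [lintegral_add_left hm1]
    -- sub-sigma-algebra measurability
    set s : Set (ℕ × Bool) := {(j, false), (j + 1, true)} with hs_def
    have hAj : Measurable[Ms A B s] (A j) :=
      measCf_Ms' A B (show ((j, false) : ℕ × Bool) ∈ s by simp [hs_def])
    have hBj : Measurable[Ms A B s] (B (j + 1)) :=
      measCf_Ms' A B (show ((j + 1, true) : ℕ × Bool) ∈ s by simp [hs_def])
    have hpmS : Measurable[Ms A B s] fun ω => (A j ω, B (j + 1) ω) := hAj.prodMk hBj
    have hSsumMs := Ssum_measMs A B c r j n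
    have hvy : ∀ (y : ℝ), Measurable[Ms A B sᶜ] fun ω =>
        ENNReal.ofReal (Real.exp (y * Ssum A B r c (j + 1) n ω)) :=
      fun y => ENNReal.measurable_ofReal.comp (Real.measurable_exp.comp
        (measurable_const.mul hSsumMs))
    have hfac1 : ∫⁻ ω, fA r c x (A j ω, B (j + 1) ω)
          * ENNReal.ofReal (Real.exp (x * Ssum A B r c (j + 1) n ω)) ∂ℙ
        = (∫⁻ ω, fA r c x (A j ω, B (j + 1) ω) ∂ℙ)
          * ∫⁻ ω, ENNReal.ofReal (Real.exp (x * Ssum A B r c (j + 1) n ω)) ∂ℙ :=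
      factor A B hA hB hindep hident hindepAB s _ _
        ((fA_meas r c x).comp hpmS) (hvy x)
    have hfac2 : ∫⁻ ω, fB r c x (A j ω, B (j + 1) ω)
          * ENNReal.ofReal (Real.exp ((c * x) * Ssum A B r c (j + 1) n ω)) ∂ℙ
        = (∫⁻ ω, fB r c x (A j ω, B (j + 1) ω) ∂ℙ)
          * ∫⁻ ω, ENNReal.ofReal (Real.exp ((c * x) * Ssum A B r c (j + 1) n ω)) ∂ℙ :=
      factor A B hA hB hindep hident hindepAB s _ _
        ((fB_meas r c x).comp hpmS) (hvy (c * x))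
    rw [hfac1, hfac2]
    rw [pair_lintegral A B hA hB hindep hident hindepAB j (j + 1) (fA r c x) (fA_meas r c x),
      pair_lintegral A B hA hB hindep hident hindepAB j (j + 1) (fB r c x) (fB_meas r c x)]
    calc (∫⁻ ω, ∫⁻ ω', fA r c x (A 0 ω, B 0 ω') ∂ℙ ∂ℙ)
            * ∫⁻ ω, ENNReal.ofReal (Real.exp (x * Ssum A B r c (j + 1) n ω)) ∂ℙ
          + (∫⁻ ω, ∫⁻ ω', fB r c x (A 0 ω, B 0 ω') ∂ℙ ∂ℙ)
            * ∫⁻ ω, ENNReal.ofReal (Real.exp ((c * x) * Ssum A B r c (j + 1) n ω)) ∂ℙ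
        ≤ (∫⁻ ω, ∫⁻ ω', fA r c x (A 0 ω, B 0 ω') ∂ℙ ∂ℙ) * ENNReal.ofReal (Real.exp (K * x))
          + (∫⁻ ω, ∫⁻ ω', fB r c x (A 0 ω, B 0 ω') ∂ℙ ∂ℙ)
            * ENNReal.ofReal (Real.exp (K * (c * x))) := by
          refine add_le_add ?_ ?_
          · exact mul_le_mul' le_rfl (ih (j + 1) x hx0 hx1)
          · exact mul_le_mul' le_rfl (ih (j + 1) (c * x) (mul_nonneg hc0.le hx0)
              (by nlinarith))
      _ ≤ ENNReal.ofReal (Real.exp (K * x)) := hK x hx0 hx1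

theorem real_key (c q p α β K x : ℝ)
    (hc0 : 0 < c) (hc1 : c < 1) (hq0 : 0 ≤ q) (hqα : q ≤ α) (hα1 : α < 1)
    (hp0 : 0 < p) (hpq : p + q = 1) (hpβ : p ≤ β)
    (hKdef : K * ((1 - c) * min p (1 - α)) = (α - q) + (β - p)) (hK0 : 0 ≤ K)
    (hx0 : 0 ≤ x) (hx1 : x ≤ 1) :
    ((1 - x) * q + x * α) * Real.exp (K * x) + ((1 - x) * p + x * β) * Real.exp (K * (c * x))
      ≤ Real.exp (K * x) := by
  have hm0 : 0 < min p (1 - α) := lt_min hp0 (by linarith)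
  have h1 : p - x * (α - q) = (1 - x) * p + x * (1 - α) := by linear_combination x * hpq
  have hm1 : min p (1 - α) ≤ p - x * (α - q) := by
    rw [h1]
    nlinarith [mul_nonneg (sub_nonneg.mpr hx1) (sub_nonneg.mpr (min_le_left p (1 - α))),
      mul_nonneg hx0 (sub_nonneg.mpr (min_le_right p (1 - α)))]
  have hKx0 : 0 ≤ K * ((1 - c) * x) := mul_nonneg hK0 (mul_nonneg (by linarith) hx0)
  have key : (1 - x) * p + x * β ≤ (p - x * (α - q)) * Real.exp (K * ((1 - c) * x)) := by
    have hexp : 1 + K * ((1 - c) * x) ≤ Real.exp (K * ((1 - c) * x)) := by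
      have := Real.add_one_le_exp (K * ((1 - c) * x)); linarith
    have h2 : (p - x * (α - q)) * (1 + K * ((1 - c) * x))
        ≤ (p - x * (α - q)) * Real.exp (K * ((1 - c) * x)) :=
      mul_le_mul_of_nonneg_left hexp (by linarith [hm1, hm0])
    refine le_trans ?_ h2
    have h3 : K * ((1 - c) * x) * min p (1 - α) ≤ K * ((1 - c) * x) * (p - x * (α - q)) :=
      mul_le_mul_of_nonneg_left hm1 hKx0
    have h4 : K * ((1 - c) * x) * min p (1 - α) = ((α - q) + (β - p)) * x := by
      calc K * ((1 - c) * x) * min p (1 - α)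
          = (K * ((1 - c) * min p (1 - α))) * x := by ring
        _ = ((α - q) + (β - p)) * x := by rw [hKdef]
    nlinarith [h3, h4]
  have hepos : (0 : ℝ) < Real.exp (K * (c * x)) := Real.exp_pos _
  have hsplit : Real.exp (K * x) = Real.exp (K * (c * x)) * Real.exp (K * ((1 - c) * x)) := by
    rw [← Real.exp_add]; ring_nf
  have hfin : ((1 - x) * p + x * β) * Real.exp (K * (c * x))
      ≤ (p - x * (α - q)) * Real.exp (K * x) := by
    calc ((1 - x) * p + x * β) * Real.exp (K * (c * x))
        ≤ ((p - x * (α - q)) * Real.exp (K * ((1 - c) * x))) * Real.exp (K * (c * x)) :=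
          mul_le_mul_of_nonneg_right key hepos.le
      _ = (p - x * (α - q)) * Real.exp (K * x) := by rw [hsplit]; ring
  have hsum : ((1 - x) * q + x * α) + (p - x * (α - q)) = 1 := by linear_combination hpq
  calc ((1 - x) * q + x * α) * Real.exp (K * x) + ((1 - x) * p + x * β) * Real.exp (K * (c * x))
      ≤ ((1 - x) * q + x * α) * Real.exp (K * x) + (p - x * (α - q)) * Real.exp (K * x) := by
        linarith [hfin]
    _ = (((1 - x) * q + x * α) + (p - x * (α - q))) * Real.exp (K * x) := by ring
    _ = Real.exp (K * x) := by rw [hsum, one_mul]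

theorem double_eq_pi (hA0 : Measurable (A 0)) (hB0 : Measurable (B 0))
    (g : ℝ × ℝ → ℝ≥0∞) (hg : Measurable g) :
    ∫⁻ ω, ∫⁻ ω', g (A 0 ω, B 0 ω') ∂ℙ ∂ℙ
      = ∫⁻ z, g z ∂(((ℙ : Measure Ω).map (A 0)).prod ((ℙ : Measure Ω).map (B 0))) := by
  haveI : IsProbabilityMeasure ((ℙ : Measure Ω).map (A 0)) :=
    Measure.isProbabilityMeasure_map hA0.aemeasurable
  haveI : IsProbabilityMeasure ((ℙ : Measure Ω).map (B 0)) :=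
    Measure.isProbabilityMeasure_map hB0.aemeasurable
  have hgm : Measurable fun x : ℝ => ∫⁻ ω', g (x, B 0 ω') ∂ℙ := by
    have h : Measurable (Function.uncurry fun (x : ℝ) (ω' : Ω) => g (x, B 0 ω')) :=
      hg.comp (measurable_id.prodMap hB0)
    exact h.lintegral_prod_right
  calc ∫⁻ ω, ∫⁻ ω', g (A 0 ω, B 0 ω') ∂ℙ ∂ℙ
      = ∫⁻ x, ∫⁻ ω', g (x, B 0 ω') ∂ℙ ∂((ℙ : Measure Ω).map (A 0)) :=
        (lintegral_map hgm hA0).symm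
    _ = ∫⁻ x, ∫⁻ y, g (x, y) ∂((ℙ : Measure Ω).map (B 0)) ∂((ℙ : Measure Ω).map (A 0)) := by
        refine lintegral_congr fun x => ?_
        exact (lintegral_map (hg.comp measurable_prodMk_left) hB0).symm
    _ = ∫⁻ z, g z ∂(((ℙ : Measure Ω).map (A 0)).prod ((ℙ : Measure Ω).map (B 0))) :=
        (lintegral_prod g hg.aemeasurable).symm

theorem choose_cK
    (hA : ∀ n, Measurable (A n)) (hB : ∀ n, Measurable (B n))
    (hA01 : ℙ {ω | A 0 ω ∈ Set.Ioo (0 : ℝ) 1} = 1)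
    (r : ℝ) (hr : 0 < r)
    (hR : ∫⁻ ω, ∫⁻ ω', ENNReal.ofReal (Real.exp ((r * A 0 ω) * B 0 ω')) ∂ℙ ∂ℙ ≠ ⊤) :
    ∃ c K : ℝ, 0 < c ∧ c < 1 ∧ 0 ≤ K ∧ ∀ x : ℝ, 0 ≤ x → x ≤ 1 →
      (∫⁻ ω, ∫⁻ ω', fA r c x (A 0 ω, B 0 ω') ∂ℙ ∂ℙ) * ENNReal.ofReal (Real.exp (K * x))
        + (∫⁻ ω, ∫⁻ ω', fB r c x (A 0 ω, B 0 ω') ∂ℙ ∂ℙ) * ENNReal.ofReal (Real.exp (K * (c * x)))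
        ≤ ENNReal.ofReal (Real.exp (K * x)) := by
  classical
  set pm : Measure (ℝ × ℝ) := ((ℙ : Measure Ω).map (A 0)).prod ((ℙ : Measure Ω).map (B 0))
    with hpmdef
  haveI : IsProbabilityMeasure ((ℙ : Measure Ω).map (A 0)) :=
    Measure.isProbabilityMeasure_map (hA 0).aemeasurable
  haveI : IsProbabilityMeasure ((ℙ : Measure Ω).map (B 0)) :=
    Measure.isProbabilityMeasure_map (hB 0).aemeasurable
  haveI : IsProbabilityMeasure pm := by rw [hpmdef]; infer_instance
  -- the function g₁
  set g₁ : ℝ × ℝ → ℝ≥0∞ := fun z => ENNReal.ofReal (Real.exp (r * z.1 * max z.2 0)) with hg₁def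
  have hg₁m : Measurable g₁ :=
    ENNReal.measurable_ofReal.comp (Real.measurable_exp.comp
      ((measurable_const.mul measurable_fst).mul (measurable_snd.max measurable_const)))
  -- full measure of the strip
  have hstrip : pm {z : ℝ × ℝ | z.1 ∈ Set.Ioo (0 : ℝ) 1} = 1 := by
    have h1 : {z : ℝ × ℝ | z.1 ∈ Set.Ioo (0 : ℝ) 1} = Set.Ioo (0 : ℝ) 1 ×ˢ Set.univ := by
      ext z; simp [Set.mem_prod]
    rw [h1, hpmdef, Measure.prod_prod, measure_univ, mul_one,
      Measure.map_apply (hA 0) measurableSet_Ioo]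
    exact hA01
  have hstripm : MeasurableSet {z : ℝ × ℝ | z.1 ∈ Set.Ioo (0 : ℝ) 1} :=
    measurable_fst measurableSet_Ioo
  have haez : ∀ᵐ z ∂pm, z.1 ∈ Set.Ioo (0 : ℝ) 1 := by
    rw [ae_iff]
    exact (prob_compl_eq_zero_iff hstripm).mpr hstrip
  -- finiteness of ∫ g₁
  have hRπ : ∫⁻ z, ENNReal.ofReal (Real.exp ((r * z.1) * z.2)) ∂pm ≠ ⊤ := by
    have hmeas0 : Measurable (fun z : ℝ × ℝ => ENNReal.ofReal (Real.exp ((r * z.1) * z.2))) := by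
      fun_prop
    rw [← double_eq_pi A B (hA 0) (hB 0) (fun z : ℝ × ℝ =>
      ENNReal.ofReal (Real.exp ((r * z.1) * z.2))) hmeas0]
    exact hR
  have hg₁fin : ∫⁻ z, g₁ z ∂pm ≠ ⊤ := by
    have hb : ∀ᵐ z ∂pm, g₁ z ≤ 1 + ENNReal.ofReal (Real.exp ((r * z.1) * z.2)) := by
      filter_upwards [haez] with z hz
      rcases le_total z.2 0 with h2 | h2
      · have : max z.2 0 = 0 := max_eq_right h2
        rw [hg₁def]
        simp only [this, mul_zero, Real.exp_zero, ENNReal.ofReal_one]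
        exact le_add_of_nonneg_right zero_le
      · have : max z.2 0 = z.2 := max_eq_left h2
        rw [hg₁def]
        simp only [this]
        rw [show r * z.1 * z.2 = (r * z.1) * z.2 from by ring]
        exact le_add_self
    have h2 := lintegral_mono_ae hb
    have h3 : ∫⁻ z, (1 + ENNReal.ofReal (Real.exp ((r * z.1) * z.2))) ∂pm
        = 1 + ∫⁻ z, ENNReal.ofReal (Real.exp ((r * z.1) * z.2)) ∂pm := by
      rw [lintegral_add_left measurable_const, lintegral_one, measure_univ]
    intro htop
    rw [htop, h3] at h2
    exact (ENNReal.add_ne_top.mpr ⟨ENNReal.one_ne_top, hRπ⟩) (top_le_iff.mp h2)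
  -- choose c
  set D : ℕ → Set (ℝ × ℝ) := fun m => {z | 1 - 1 / (m + 2 : ℝ) < z.1} with hDdef
  have hDm : ∀ m, MeasurableSet (D m) := fun m => measurable_fst measurableSet_Ioi
  set ρ : Measure (ℝ × ℝ) := pm.withDensity g₁ with hρdef
  haveI : IsFiniteMeasure ρ := isFiniteMeasure_withDensity hg₁fin
  have hanti : Antitone D := by
    intro m m' hmm z hz
    simp only [hDdef, Set.mem_setOf_eq] at hz ⊢
    have : 1 - 1 / (m' + 2 : ℝ) ≥ 1 - 1 / (m + 2 : ℝ) := by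
      have h1 : (m + 2 : ℝ) ≤ (m' + 2 : ℝ) := by exact_mod_cast by omega
      have : 1 / (m' + 2 : ℝ) ≤ 1 / (m + 2 : ℝ) :=
        one_div_le_one_div_of_le (by positivity) h1
      linarith
    linarith
  have hInter : (⋂ m, D m) ⊆ {z : ℝ × ℝ | z.1 ∈ Set.Ioo (0 : ℝ) 1}ᶜ := by
    intro z hz
    simp only [Set.mem_iInter, hDdef, Set.mem_setOf_eq] at hz
    simp only [Set.mem_compl_iff, Set.mem_setOf_eq, Set.mem_Ioo, not_and, not_lt]
    intro _
    by_contra hlt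
    push_neg at hlt
    obtain ⟨m, hm⟩ := exists_nat_gt (1 / (1 - z.1))
    have h1z : 0 < 1 - z.1 := by linarith
    have hm2 : 1 / (1 - z.1) < (m + 2 : ℝ) := by push_cast; linarith
    have : 1 / (m + 2 : ℝ) < 1 - z.1 := by
      rw [div_lt_iff₀ (by positivity)]
      rw [div_lt_iff₀ h1z] at hm2
      linarith [hm2]
    have := hz m
    linarith
  have hρInter : ρ (⋂ m, D m) = 0 := by
    have hπ0 : pm (⋂ m, D m) = 0 :=
      measure_mono_null hInter ((prob_compl_eq_zero_iff hstripm).mpr hstrip)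
    rw [hρdef, withDensity_apply _ (MeasurableSet.iInter hDm)]
    exact setLIntegral_measure_zero _ _ hπ0
  have htend : Tendsto (fun m => ρ (D m)) atTop (𝓝 0) := by
    have h := tendsto_measure_iInter_atTop (μ := ρ)
      (fun m => (hDm m).nullMeasurableSet) hanti ⟨0, measure_ne_top ρ _⟩
    rw [hρInter] at h
    exact h
  obtain ⟨m, hm⟩ := (htend.eventually_lt_const (by norm_num : (0 : ℝ≥0∞) < 1)).exists
  set c : ℝ := 1 - 1 / (m + 2 : ℝ) with hcdef
  have hc0 : 0 < c := by
    have h1 : 1 / (m + 2 : ℝ) ≤ 1 / 2 := by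
      apply one_div_le_one_div_of_le <;> [norm_num; exact_mod_cast by omega]
    simp only [hcdef]; linarith
  have hc1 : c < 1 := by
    have : 0 < 1 / (m + 2 : ℝ) := by positivity
    simp only [hcdef]; linarith
  have hDc : D m = {z : ℝ × ℝ | c < z.1} := by rw [hDdef]
  have hmem : ∀ z : ℝ × ℝ, z ∈ D m ↔ c < z.1 := fun z => by rw [hDc]; exact Iff.rfl
  -- the real constants
  have hρD : ρ (D m) = ∫⁻ z in D m, g₁ z ∂pm := withDensity_apply _ (hDm m)
  have hρDc : ρ (D m)ᶜ = ∫⁻ z in (D m)ᶜ, g₁ z ∂pm := withDensity_apply _ (hDm m).compl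
  have hqne : pm (D m) ≠ ⊤ := measure_ne_top _ _
  have hpne : pm (D m)ᶜ ≠ ⊤ := measure_ne_top _ _
  have hαne : ρ (D m) ≠ ⊤ := measure_ne_top _ _
  have hβne : ρ (D m)ᶜ ≠ ⊤ := measure_ne_top _ _
  set q : ℝ := (pm (D m)).toReal with hqdef
  set p : ℝ := (pm (D m)ᶜ).toReal with hpdef
  set α : ℝ := (ρ (D m)).toReal with hαdef
  set β : ℝ := (ρ (D m)ᶜ).toReal with hβdef
  have h1g : ∀ᵐ z ∂pm, 1 ≤ g₁ z := by
    filter_upwards [haez] with z hz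
    rw [hg₁def, ← ENNReal.ofReal_one]
    exact ENNReal.ofReal_le_ofReal (Real.one_le_exp
      (mul_nonneg (mul_nonneg hr.le hz.1.le) (le_max_right _ _)))
  have hqα : q ≤ α := by
    refine (ENNReal.toReal_le_toReal hqne hαne).mpr ?_
    rw [hρD, ← setLIntegral_one]
    exact lintegral_mono_ae (ae_restrict_of_ae h1g)
  have hpβ : p ≤ β := by
    refine (ENNReal.toReal_le_toReal hpne hβne).mpr ?_
    rw [hρDc, ← setLIntegral_one]
    exact lintegral_mono_ae (ae_restrict_of_ae h1g)
  have hα1 : α < 1 := by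
    have := (ENNReal.toReal_lt_toReal hαne ENNReal.one_ne_top).mpr hm
    simpa using this
  have hpq : p + q = 1 := by
    have h := measure_add_measure_compl (μ := pm) (hDm m)
    rw [measure_univ] at h
    have h2 := congrArg ENNReal.toReal h
    rw [ENNReal.toReal_add hqne hpne] at h2
    simp only [ENNReal.toReal_one] at h2
    linarith
  have hq0 : (0:ℝ) ≤ q := ENNReal.toReal_nonneg
  have hp0 : (0:ℝ) < p := by linarith
  have hden : (0:ℝ) < (1 - c) * min p (1 - α) := by
    apply mul_pos (by linarith) (lt_min hp0 (by linarith))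
  set K : ℝ := ((α - q) + (β - p)) / ((1 - c) * min p (1 - α)) with hKdef'
  have hK0 : 0 ≤ K := div_nonneg (by linarith) hden.le
  have hKdef : K * ((1 - c) * min p (1 - α)) = (α - q) + (β - p) :=
    div_mul_cancel₀ _ hden.ne'
  refine ⟨c, K, hc0, hc1, hK0, fun x hx0 hx1 => ?_⟩
  have h1x : (0:ℝ) ≤ 1 - x := by linarith
  -- convert double integrals
  rw [double_eq_pi A B (hA 0) (hB 0) (fA r c x) (fA_meas r c x),
    double_eq_pi A B (hA 0) (hB 0) (fB r c x) (fB_meas r c x), ← hpmdef]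
  -- bound for fA
  have hindm1 : Measurable ((D m).indicator (fun _ : ℝ × ℝ => ENNReal.ofReal (1 - x))) :=
    measurable_const.indicator (hDm m)
  have hindm1' : Measurable ((D m)ᶜ.indicator (fun _ : ℝ × ℝ => ENNReal.ofReal (1 - x))) :=
    measurable_const.indicator (hDm m).compl
  have hconvkey : ∀ z : ℝ × ℝ, z.1 ∈ Set.Ioo (0:ℝ) 1 →
      ENNReal.ofReal (Real.exp (x * (r * z.1 * max z.2 0)))
        ≤ ENNReal.ofReal (1 - x) + ENNReal.ofReal x * g₁ z := by
    intro z hz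
    have hV0 : 0 ≤ r * z.1 * max z.2 0 :=
      mul_nonneg (mul_nonneg hr.le hz.1.le) (le_max_right _ _)
    have hconv : Real.exp (x * (r * z.1 * max z.2 0))
        ≤ (1 - x) + x * Real.exp (r * z.1 * max z.2 0) := by
      have h := convexOn_exp.2 (Set.mem_univ (0:ℝ))
        (Set.mem_univ (r * z.1 * max z.2 0)) h1x hx0 (by ring)
      rw [smul_eq_mul, smul_eq_mul, smul_eq_mul, smul_eq_mul] at h
      simpa [Real.exp_zero] using h
    calc ENNReal.ofReal (Real.exp (x * (r * z.1 * max z.2 0)))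
        ≤ ENNReal.ofReal ((1 - x) + x * Real.exp (r * z.1 * max z.2 0)) :=
          ENNReal.ofReal_le_ofReal hconv
      _ = ENNReal.ofReal (1 - x) + ENNReal.ofReal x * g₁ z := by
          rw [ENNReal.ofReal_add h1x (by positivity), ENNReal.ofReal_mul hx0]
  have hax : ∫⁻ z, fA r c x z ∂pm ≤ ENNReal.ofReal ((1 - x) * q + x * α) := by
    have hpt : ∀ᵐ z ∂pm, fA r c x z ≤
        (D m).indicator (fun _ => ENNReal.ofReal (1 - x)) z
          + (D m).indicator (fun z => ENNReal.ofReal x * g₁ z) z := by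
      filter_upwards [haez] with z hz
      by_cases hD : z ∈ D m
      · have hcz : c < z.1 := (hmem z).mp hD
        rw [Set.indicator_of_mem hD, Set.indicator_of_mem hD]
        unfold fA
        rw [if_pos hcz]
        exact hconvkey z hz
      · have hcz : ¬ c < z.1 := fun h => hD ((hmem z).mpr h)
        rw [Set.indicator_of_notMem hD, Set.indicator_of_notMem hD]
        unfold fA
        rw [if_neg hcz]
        simp
    calc ∫⁻ z, fA r c x z ∂pm
        ≤ ∫⁻ z, ((D m).indicator (fun _ => ENNReal.ofReal (1 - x)) z
            + (D m).indicator (fun z => ENNReal.ofReal x * g₁ z) z) ∂pm :=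
          lintegral_mono_ae hpt
      _ = ENNReal.ofReal (1 - x) * pm (D m) + ENNReal.ofReal x * ρ (D m) := by
          rw [lintegral_add_left hindm1, lintegral_indicator (hDm m), setLIntegral_const,
            lintegral_indicator (hDm m), lintegral_const_mul _ hg₁m, hρD]
      _ = ENNReal.ofReal (1 - x) * ENNReal.ofReal q + ENNReal.ofReal x * ENNReal.ofReal α := by
          rw [hqdef, hαdef, ENNReal.ofReal_toReal hqne, ENNReal.ofReal_toReal hαne]
      _ = ENNReal.ofReal ((1 - x) * q + x * α) := by
          rw [← ENNReal.ofReal_mul h1x, ← ENNReal.ofReal_mul hx0,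
            ← ENNReal.ofReal_add (by positivity) (by positivity)]
  have hbx : ∫⁻ z, fB r c x z ∂pm ≤ ENNReal.ofReal ((1 - x) * p + x * β) := by
    have hpt : ∀ᵐ z ∂pm, fB r c x z ≤
        (D m)ᶜ.indicator (fun _ => ENNReal.ofReal (1 - x)) z
          + (D m)ᶜ.indicator (fun z => ENNReal.ofReal x * g₁ z) z := by
      filter_upwards [haez] with z hz
      by_cases hD : z ∈ D m
      · have hcz : c < z.1 := (hmem z).mp hD
        have hD' : z ∉ (D m)ᶜ := fun h => h hD
        rw [Set.indicator_of_notMem hD', Set.indicator_of_notMem hD']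
        unfold fB
        rw [if_pos hcz]
        simp
      · have hcz : ¬ c < z.1 := fun h => hD ((hmem z).mpr h)
        have hD' : z ∈ (D m)ᶜ := hD
        rw [Set.indicator_of_mem hD', Set.indicator_of_mem hD']
        unfold fB
        rw [if_neg hcz]
        exact hconvkey z hz
    calc ∫⁻ z, fB r c x z ∂pm
        ≤ ∫⁻ z, ((D m)ᶜ.indicator (fun _ => ENNReal.ofReal (1 - x)) z
            + (D m)ᶜ.indicator (fun z => ENNReal.ofReal x * g₁ z) z) ∂pm :=
          lintegral_mono_ae hpt
      _ = ENNReal.ofReal (1 - x) * pm (D m)ᶜ + ENNReal.ofReal x * ρ (D m)ᶜ := by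
          rw [lintegral_add_left hindm1', lintegral_indicator (hDm m).compl, setLIntegral_const,
            lintegral_indicator (hDm m).compl, lintegral_const_mul _ hg₁m, hρDc]
      _ = ENNReal.ofReal (1 - x) * ENNReal.ofReal p + ENNReal.ofReal x * ENNReal.ofReal β := by
          rw [hpdef, hβdef, ENNReal.ofReal_toReal hpne, ENNReal.ofReal_toReal hβne]
      _ = ENNReal.ofReal ((1 - x) * p + x * β) := by
          rw [← ENNReal.ofReal_mul h1x, ← ENNReal.ofReal_mul hx0,
            ← ENNReal.ofReal_add (by positivity) (by positivity)]
  calc (∫⁻ z, fA r c x z ∂pm) * ENNReal.ofReal (Real.exp (K * x))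
        + (∫⁻ z, fB r c x z ∂pm) * ENNReal.ofReal (Real.exp (K * (c * x)))
      ≤ ENNReal.ofReal ((1 - x) * q + x * α) * ENNReal.ofReal (Real.exp (K * x))
        + ENNReal.ofReal ((1 - x) * p + x * β) * ENNReal.ofReal (Real.exp (K * (c * x))) :=
        add_le_add (mul_le_mul' hax le_rfl) (mul_le_mul' hbx le_rfl)
    _ = ENNReal.ofReal (((1 - x) * q + x * α) * Real.exp (K * x)
          + ((1 - x) * p + x * β) * Real.exp (K * (c * x))) := by
        rw [← ENNReal.ofReal_mul (by positivity), ← ENNReal.ofReal_mul (by positivity),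
          ← ENNReal.ofReal_add (by positivity) (by positivity)]
    _ ≤ ENNReal.ofReal (Real.exp (K * x)) :=
        ENNReal.ofReal_le_ofReal (real_key c q p α β K x hc0 hc1 hq0 hqα hα1 hp0 hpq hpβ
          hKdef hK0 hx0 hx1)

omit [IsProbabilityMeasure (ℙ : Measure Ω)] in
theorem Pc_succ_top (c : ℝ) (j k : ℕ) (ω : Ω) :
    Pc A c j (k + 1) ω = Pc A c j k ω * (if A (j + k) ω ≤ c then c else 1) := by
  unfold Pc
  rw [Finset.prod_range_succ]

theorem backward_dir
    (Xstar : Ω → ℝ) (hXs : Measurable Xstar)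
    (hA : ∀ n, Measurable (A n)) (hB : ∀ n, Measurable (B n))
    (hindep : iIndepFun (fun n ω => (A n ω, B n ω)) ℙ)
    (hident : ∀ n, IdentDistrib (fun ω => (A n ω, B n ω)) (fun ω => (A 0 ω, B 0 ω)) ℙ ℙ)
    (hindepAB : IndepFun (A 0) (B 0) ℙ)
    (hXsconv : ∀ᵐ ω ∂ℙ, Tendsto
      (fun n => ∑ k ∈ Finset.range n, (∏ i ∈ Finset.range (k + 1), A i ω) * B (k + 1) ω)
      atTop (nhds (Xstar ω)))
    (hA01 : ℙ {ω | A 0 ω ∈ Set.Ioo (0 : ℝ) 1} = 1)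
    (r : ℝ) (hr : 0 < r)
    (hR : ∫⁻ ω, (∫⁻ ω', ENNReal.ofReal (Real.exp ((r * A 0 ω) * B 0 ω')) ∂ℙ) ∂ℙ < ⊤) :
    ∫⁻ ω, ENNReal.ofReal (Real.exp (r * Xstar ω)) ∂ℙ < ⊤ := by
  obtain ⟨c, K, hc0, hc1, hK0, hK⟩ := choose_cK A B hA hB hA01 r hr hR.ne
  -- a.s. all A i in (0,1)
  have hAas : ∀ᵐ ω ∂ℙ, ∀ i, A i ω ∈ Set.Ioo (0 : ℝ) 1 := by
    rw [ae_all_iff]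
    intro i
    have hid : ℙ {ω | A i ω ∈ Set.Ioo (0:ℝ) 1} = ℙ {ω | A 0 ω ∈ Set.Ioo (0:ℝ) 1} :=
      ((hident i).comp measurable_fst).measure_mem_eq measurableSet_Ioo
    rw [ae_iff]
    exact (prob_compl_eq_zero_iff ((hA i) measurableSet_Ioo)).mpr (hid.trans hA01)
  -- pointwise liminf bound
  have hptw : ∀ᵐ ω ∂ℙ, ENNReal.ofReal (Real.exp (r * Xstar ω)) ≤
      liminf (fun n => ENNReal.ofReal (Real.exp (Ssum A B r c 0 n ω))) atTop := by
    filter_upwards [hAas, hXsconv] with ω hAω hconv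
    have hSle : ∀ n, r * (∑ k ∈ Finset.range n, (∏ i ∈ Finset.range (k + 1), A i ω)
        * B (k + 1) ω) ≤ Ssum A B r c 0 n ω := by
      intro n
      rw [Finset.mul_sum]
      unfold Ssum
      apply Finset.sum_le_sum
      intro k hkmem
      clear hkmem
      have hprod : (0:ℝ) ≤ ∏ i ∈ Finset.range k, A i ω ∧
          (∏ i ∈ Finset.range k, A i ω) ≤ Pc A c 0 k ω ∧ 0 ≤ Pc A c 0 k ω := by
        induction k with
        | zero => simp [Pc]
        | succ k ihk =>
          obtain ⟨h1, h2, h3⟩ := ihk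
          rw [Finset.prod_range_succ, Pc_succ_top, Nat.zero_add]
          have hite0 : (0:ℝ) ≤ if A k ω ≤ c then c else 1 := by
            split
            · exact hc0.le
            · exact zero_le_one
          refine ⟨mul_nonneg h1 (hAω k).1.le, ?_, mul_nonneg h3 hite0⟩
          by_cases h : A k ω ≤ c
          · rw [if_pos h]
            exact mul_le_mul h2 h (hAω k).1.le h3
          · rw [if_neg h]
            have := mul_le_mul h2 (hAω k).2.le (hAω k).1.le h3
            linarith [this]
      obtain ⟨hP0, hPQ, hQ0⟩ := hprod
      have hWf : Wf A B r (0 + k) ω = r * A k ω * max (B (k + 1) ω) 0 := by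
        rw [Nat.zero_add]; rfl
      rw [hWf, Finset.prod_range_succ]
      set P := ∏ i ∈ Finset.range k, A i ω
      set Q := Pc A c 0 k ω
      set a := A k ω
      set b := B (k + 1) ω
      have ha0 : 0 ≤ a := (hAω k).1.le
      have hb : b ≤ max b 0 := le_max_left _ _
      have hmax0 : (0:ℝ) ≤ max b 0 := le_max_right _ _
      have h1 : r * (P * a * b) ≤ r * (P * a * max b 0) :=
        mul_le_mul_of_nonneg_left
          (mul_le_mul_of_nonneg_left hb (mul_nonneg hP0 ha0)) hr.le
      have h2 : r * (P * a * max b 0) ≤ r * (Q * a * max b 0) :=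
        mul_le_mul_of_nonneg_left
          (mul_le_mul_of_nonneg_right (mul_le_mul_of_nonneg_right hPQ ha0) hmax0) hr.le
      calc r * (P * a * b) ≤ r * (Q * a * max b 0) := le_trans h1 h2
        _ = Q * (r * a * max b 0) := by ring
    have h2 : Tendsto (fun n => ENNReal.ofReal (Real.exp (r * (∑ k ∈ Finset.range n,
        (∏ i ∈ Finset.range (k + 1), A i ω) * B (k + 1) ω)))) atTop
        (𝓝 (ENNReal.ofReal (Real.exp (r * Xstar ω)))) :=
      (ENNReal.continuous_ofReal.tendsto _).comp
        ((Real.continuous_exp.tendsto _).comp (hconv.const_mul r))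
    rw [← h2.liminf_eq]
    exact liminf_le_liminf (Eventually.of_forall fun n =>
      ENNReal.ofReal_le_ofReal (Real.exp_le_exp.mpr (hSle n)))
  have hmeasn : ∀ n, Measurable fun ω => ENNReal.ofReal (Real.exp (Ssum A B r c 0 n ω)) :=
    fun n => ENNReal.measurable_ofReal.comp
      (Real.measurable_exp.comp (Ssum_meas A B hA hB r c 0 n))
  have hlim : ∀ n, ∫⁻ ω, ENNReal.ofReal (Real.exp (Ssum A B r c 0 n ω)) ∂ℙ
      ≤ ENNReal.ofReal (Real.exp (K * 1)) := by
    intro n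
    have := main_ind A B hA hB hindep hident hindepAB r c K hc0 hc1 hK0 hK n 0 1
      zero_le_one le_rfl
    simpa using this
  calc ∫⁻ ω, ENNReal.ofReal (Real.exp (r * Xstar ω)) ∂ℙ
      ≤ ∫⁻ ω, liminf (fun n => ENNReal.ofReal (Real.exp (Ssum A B r c 0 n ω))) atTop ∂ℙ :=
        lintegral_mono_ae hptw
    _ ≤ liminf (fun n => ∫⁻ ω, ENNReal.ofReal (Real.exp (Ssum A B r c 0 n ω)) ∂ℙ) atTop :=
        lintegral_liminf_le hmeasn
    _ ≤ liminf (fun _ : ℕ => ENNReal.ofReal (Real.exp (K * 1))) atTop :=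
        liminf_le_liminf (Eventually.of_forall hlim)
    _ = ENNReal.ofReal (Real.exp (K * 1)) := liminf_const _
    _ < ⊤ := ENNReal.ofReal_lt_top

end Aux

theorem stmt_7
    {Ω : Type*} [MeasureSpace Ω] [IsProbabilityMeasure (ℙ : Measure Ω)]
    (A B : ℕ → Ω → ℝ) (X Xstar : Ω → ℝ)
    (hA : ∀ n, Measurable (A n)) (hB : ∀ n, Measurable (B n))
    (hX : Measurable X) (hXs : Measurable Xstar)
    (hindep : iIndepFun (fun n ω => (A n ω, B n ω)) ℙ)
    (hident : ∀ n, IdentDistrib (fun ω => (A n ω, B n ω)) (fun ω => (A 0 ω, B 0 ω)) ℙ ℙ)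
    (hindepAB : IndepFun (A 0) (B 0) ℙ)
    (hB0 : ℙ {ω | B 0 ω = 0} < 1)
    (hXconv : ∀ᵐ ω ∂ℙ, Tendsto
      (fun n => ∑ k ∈ Finset.range n, (∏ i ∈ Finset.range k, A i ω) * B k ω)
      atTop (nhds (X ω)))
    (hXsconv : ∀ᵐ ω ∂ℙ, Tendsto
      (fun n => ∑ k ∈ Finset.range n, (∏ i ∈ Finset.range (k + 1), A i ω) * B (k + 1) ω)
      atTop (nhds (Xstar ω)))
    (hA01 : ℙ {ω | A 0 ω ∈ Set.Ioo (0 : ℝ) 1} = 1)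
    (r : ℝ) (hr : 0 < r) :
    (∫⁻ ω, ENNReal.ofReal (Real.exp (r * Xstar ω)) ∂ℙ < ⊤) ↔
      (∫⁻ ω, (∫⁻ ω', ENNReal.ofReal (Real.exp ((r * A 0 ω) * B 0 ω')) ∂ℙ) ∂ℙ < ⊤) := by
  constructor
  · intro h
    exact forward_dir A B Xstar hXs hA hB hindep hident hindepAB hXsconv hA01 r hr h
  · intro h
    exact backward_dir A B Xstar hXs hA hB hindep hident hindepAB hXsconv hA01 r hr h
end

section
/- Assume that A and B are independent, P{A=1}∈[0,1), P{B=0}<1, the perpetuity X=∑_{k≥1}Π_{k-1}B_k converges a.s., and one of the following holds: (a) P{A∈(0,1]}=1, or (b) P{A∈(−1,0)}=1, or (c) P{|A|∈(0,1]}=1 and P{A=−1}∈(0,1). Suppose P{B>x} ~ g(x)e^{−bx} as x→∞ for some b>0 and a function g such that x↦g(log x) is slowly varying at ∞ (i.e., for every c>0, g(log(cx))/g(log x)→1 as x→∞) and limsup_{x→∞} (sup_{1≤y≤x} g(y))/g(x) < ∞. If E[e^{bX*}]<∞, where X*:=∑_{k≥1}Π_k B_{k+1}=A_1B_2+A_1A_2B_3+⋯,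 then P{X>x} ~ E[e^{bX*}]·P{B>x} as x→∞, i.e., lim_{x→∞} P{X>x}/P{B>x} = E[e^{bX*}]. -/
open MeasureTheory ProbabilityTheory Filter Finset


set_option maxHeartbeats 1000000 in
lemma tail_conv_lemma (μ : Measure ℝ) [IsProbabilityMeasure μ] (rR : ℝ → ℝ)
    (hr_meas : Measurable rR) (hr_nonneg : ∀ t, 0 ≤ rR t) (hr_anti : Antitone rR)
    (hr_le_one : ∀ t, rR t ≤ 1)
    (b : ℝ) (hb : 0 < b) (g : ℝ → ℝ)
    (htail : Tendsto (fun x => rR x / (g x * Real.exp (-b * x))) atTop (nhds 1))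
    (hgs : ∀ y : ℝ, Tendsto (fun x => g (x - y) / g x) atTop (nhds 1))
    (hgsup : ∃ M : ℝ, ∀ᶠ x : ℝ in atTop, ∀ y ∈ Set.Icc (1 : ℝ) x, g y / g x ≤ M)
    (hexp : Integrable (fun y => Real.exp (b * y)) μ) :
    Tendsto (fun x => (∫ y, rR (x - y) ∂μ) / rR x) atTop
      (nhds (∫ y, Real.exp (b * y) ∂μ)) := by
  obtain ⟨M, hM⟩ := hgsup
  have h12 : ∀ᶠ x in atTop, rR x / (g x * Real.exp (-b * x)) ∈ Set.Ioo (1/2 : ℝ) 2 :=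
    htail (Ioo_mem_nhds (by norm_num) (by norm_num))
  have hkey : ∀ᶠ x in atTop, 0 < g x ∧ 0 < g x * Real.exp (-b * x) ∧
      g x * Real.exp (-b * x) / 2 ≤ rR x ∧ rR x ≤ 2 * (g x * Real.exp (-b * x)) ∧
      0 < rR x := by
    filter_upwards [h12] with x hx
    obtain ⟨h1, h2⟩ := hx
    have hφpos : 0 < g x * Real.exp (-b * x) := by
      rcases lt_trichotomy (g x * Real.exp (-b * x)) 0 with h | h | h
      · exfalso
        have : rR x / (g x * Real.exp (-b * x)) ≤ 0 :=
          div_nonpos_iff.mpr (Or.inl ⟨hr_nonneg x, h.le⟩)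
        linarith
      · exfalso; rw [h, div_zero] at h1; linarith
      · exact h
    have hgx : 0 < g x := by
      rcases mul_pos_iff.mp hφpos with ⟨h, _⟩ | ⟨_, h⟩
      · exact h
      · exact absurd h (not_lt.mpr (Real.exp_pos _).le)
    have hle : rR x ≤ 2 * (g x * Real.exp (-b * x)) := by
      have := (div_le_iff₀ hφpos).mp h2.le
      linarith
    have hge : g x * Real.exp (-b * x) / 2 ≤ rR x := by
      have := (le_div_iff₀ hφpos).mp h1.le
      linarith
    exact ⟨hgx, hφpos, hge, hle, lt_of_lt_of_le (by positivity) hge⟩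
  -- pick a point y₀ with 1 ≤ y₀ and g y₀ > 0
  obtain ⟨y₀, hy₀k, hy₀1⟩ := (hkey.and (eventually_ge_atTop (1 : ℝ))).exists
  have hy₀g : 0 < g y₀ := hy₀k.1
  -- M is positive
  have hMpos : 0 < M := by
    obtain ⟨xbar, hbnd, hkx, hxbar⟩ := (hM.and (hkey.and (eventually_ge_atTop y₀))).exists
    have h1 : g y₀ / g xbar ≤ M := hbnd y₀ ⟨hy₀1, hxbar⟩
    have h2 : 0 < g y₀ / g xbar := div_pos hy₀g hkx.1
    linarith
  set δ : ℝ := g y₀ / M with hδ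
  have hδpos : 0 < δ := div_pos hy₀g hMpos
  have hδev : ∀ᶠ x in atTop, δ ≤ g x := by
    filter_upwards [hM, hkey, eventually_ge_atTop y₀] with x h1 h2 h3
    have h4 : g y₀ / g x ≤ M := h1 y₀ ⟨hy₀1, h3⟩
    rw [hδ, div_le_iff₀ hMpos]
    have := (div_le_iff₀ h2.1).mp h4
    linarith
  obtain ⟨x₀, hx₀⟩ := eventually_atTop.mp
    (((hkey.and hδev).and (hM.and (eventually_ge_atTop (1 : ℝ)))))
  set C : ℝ := max 1 (max (4 * M) (2 / δ * Real.exp (b * x₀))) with hC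
  have hC1 : (1 : ℝ) ≤ C := le_max_left _ _
  have hC4M : 4 * M ≤ C := le_trans (le_max_left _ _) (le_max_right _ _)
  have hCδ : 2 / δ * Real.exp (b * x₀) ≤ C := le_trans (le_max_right _ _) (le_max_right _ _)
  have key := tendsto_integral_filter_of_dominated_convergence
      (μ := μ) (l := (atTop : Filter ℝ)) (F := fun x (y : ℝ) => rR (x - y) / rR x)
      (f := fun y => Real.exp (b * y)) (bound := fun y => C * (1 + Real.exp (b * y)))
      ?_ ?_ ?_ ?_
  · exact key.congr fun x => integral_div (rR x) _
  · exact Eventually.of_forall fun x =>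
      ((hr_meas.comp (measurable_const.sub measurable_id)).div_const _).aestronglyMeasurable
  · -- bound
    filter_upwards [eventually_ge_atTop x₀] with x hx
    refine ae_of_all _ fun y => ?_
    obtain ⟨⟨⟨hgx, hφx, hφrx, hrφx, hrx⟩, hδx⟩, hMx, h1x⟩ := hx₀ x hx
    have hbexp : (0 : ℝ) < Real.exp (b * y) := Real.exp_pos _
    have hnn : 0 ≤ rR (x - y) / rR x := div_nonneg (hr_nonneg _) (hr_nonneg _)
    rw [Real.norm_of_nonneg hnn]
    have hC0 : (0:ℝ) ≤ C := by linarith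
    have hCexp : C * Real.exp (b * y) ≤ C * (1 + Real.exp (b * y)) :=
      mul_le_mul_of_nonneg_left (by linarith) hC0
    have hC' : C ≤ C * (1 + Real.exp (b * y)) := by
      have h := mul_le_mul_of_nonneg_left
        (by linarith : (1:ℝ) ≤ 1 + Real.exp (b * y)) hC0
      simpa using h
    rcases le_or_gt y 0 with hy | hy
    · have h1 : rR (x - y) ≤ rR x := hr_anti (by linarith)
      have h2 : rR (x - y) / rR x ≤ 1 := (div_le_one hrx).mpr h1
      linarith
    rcases le_or_gt y (x - x₀) with hy2 | hy2
    · obtain ⟨⟨⟨hgt, hφt, hφrt, hrφt, hrt⟩, hδt⟩, hMt, h1t⟩ := hx₀ (x - y) (by linarith)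
      have hgle : g (x - y) / g x ≤ M := hMx (x - y) ⟨h1t, by linarith⟩
      have hr1 : rR (x - y) / rR x ≤
          (2 * (g (x - y) * Real.exp (-b * (x - y)))) / (g x * Real.exp (-b * x) / 2) :=
        div_le_div₀ (by positivity) hrφt (by positivity) hφrx
      have he : Real.exp (-b * (x - y)) = Real.exp (b * y) * Real.exp (-b * x) := by
        rw [← Real.exp_add]; ring_nf
      have heq : (2 * (g (x - y) * Real.exp (-b * (x - y)))) / (g x * Real.exp (-b * x) / 2)
          = 4 * (g (x - y) / g x) * Real.exp (b * y) := by
        rw [he]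
        field_simp
        ring
      rw [heq] at hr1
      have h2 : 4 * (g (x - y) / g x) * Real.exp (b * y) ≤ 4 * M * Real.exp (b * y) :=
        mul_le_mul_of_nonneg_right (by linarith) hbexp.le
      have h3 : 4 * M * Real.exp (b * y) ≤ C * Real.exp (b * y) :=
        mul_le_mul_of_nonneg_right hC4M hbexp.le
      linarith
    · have h2 : δ * Real.exp (-b * x) / 2 ≤ rR x := by
        have : δ * Real.exp (-b * x) ≤ g x * Real.exp (-b * x) := by
          have := Real.exp_pos (-b * x); nlinarith
        linarith
      have hr1 : rR (x - y) / rR x ≤ 1 / (δ * Real.exp (-b * x) / 2) :=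
        div_le_div₀ zero_le_one (hr_le_one _) (by positivity) h2
      have heq : 1 / (δ * Real.exp (-b * x) / 2) = 2 / δ * Real.exp (b * x) := by
        rw [neg_mul, Real.exp_neg]
        field_simp
      rw [heq] at hr1
      have h3 : Real.exp (b * x) ≤ Real.exp (b * x₀) * Real.exp (b * y) := by
        rw [← Real.exp_add]
        exact Real.exp_le_exp.mpr (by nlinarith [hb, hy2])
      have h4 : 2 / δ * Real.exp (b * x) ≤ C * Real.exp (b * y) := by
        have h5 : 2 / δ * Real.exp (b * x) ≤ 2 / δ * (Real.exp (b * x₀) * Real.exp (b * y)) :=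
          mul_le_mul_of_nonneg_left h3 (by positivity)
        have h6 : 2 / δ * (Real.exp (b * x₀) * Real.exp (b * y))
            = (2 / δ * Real.exp (b * x₀)) * Real.exp (b * y) := by ring
        rw [h6] at h5
        have h7 : (2 / δ * Real.exp (b * x₀)) * Real.exp (b * y) ≤ C * Real.exp (b * y) :=
          mul_le_mul_of_nonneg_right hCδ hbexp.le
        linarith
      linarith
  · exact (((integrable_const (1 : ℝ)).add hexp).const_mul C)
  · -- pointwise limit
    refine ae_of_all _ fun y => ?_
    have hsub : Tendsto (fun x : ℝ => x - y) atTop atTop :=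
      (tendsto_atTop_add_const_right atTop (-y) tendsto_id).congr
        fun x => (sub_eq_add_neg x y).symm
    have T1 : Tendsto (fun x => rR (x - y) / (g (x - y) * Real.exp (-b * (x - y))))
        atTop (nhds 1) := htail.comp hsub
    have T2 := hgs y
    have T3 : Tendsto (fun x => (g x * Real.exp (-b * x)) / rR x) atTop (nhds 1) := by
      have := htail.inv₀ one_ne_zero
      simpa [inv_div] using this
    have Tprod : Tendsto (fun x =>
        (rR (x - y) / (g (x - y) * Real.exp (-b * (x - y)))) *
          ((g (x - y) / g x) * Real.exp (b * y)) *
          ((g x * Real.exp (-b * x)) / rR x)) atTop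
        (nhds (1 * (1 * Real.exp (b * y)) * 1)) :=
      (T1.mul (T2.mul_const _)).mul T3
    rw [one_mul, mul_one, one_mul] at Tprod
    refine Tprod.congr' ?_
    filter_upwards [eventually_ge_atTop x₀, eventually_ge_atTop (x₀ + y)] with x hx hxy
    obtain ⟨⟨⟨hgx, _, _, _, hrx⟩, _⟩, _, _⟩ := hx₀ x hx
    obtain ⟨⟨⟨hgt, _, _, _, _⟩, _⟩, _, _⟩ := hx₀ (x - y) (by linarith)
    have he : Real.exp (-b * (x - y)) = Real.exp (b * y) * Real.exp (-b * x) := by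
      rw [← Real.exp_add]; ring_nf
    rw [he]
    field_simp [hgx.ne', hrx.ne', hgt.ne', Real.exp_ne_zero]


lemma indep_snd_pair {Ω : Type*} [MeasureSpace Ω] [IsProbabilityMeasure (ℙ : Measure Ω)]
    {E : Type*} [MeasurableSpace E] (A B : Ω → ℝ) (W : Ω → E)
    (hA : Measurable A) (hB : Measurable B) (hW : Measurable W)
    (h1 : IndepFun (fun ω => (A ω, B ω)) W ℙ) (h2 : IndepFun A B ℙ) :
    IndepFun B (fun ω => (A ω, W ω)) ℙ := by
  haveI : IsProbabilityMeasure ((Measure.map A ℙ)) := Measure.isProbabilityMeasure_map hA.aemeasurable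
  haveI : IsProbabilityMeasure ((Measure.map B ℙ)) := Measure.isProbabilityMeasure_map hB.aemeasurable
  haveI : IsProbabilityMeasure ((Measure.map W ℙ)) := Measure.isProbabilityMeasure_map hW.aemeasurable
  have hAW : IndepFun A W ℙ := by
    have := h1.comp (measurable_fst : Measurable (Prod.fst : ℝ × ℝ → ℝ)) measurable_id
    exact this
  rw [indepFun_iff_map_prod_eq_prod_map_map hB.aemeasurable ((hA.prodMk hW)).aemeasurable]
  have hAWm : Measure.map (fun ω => (A ω, W ω)) ℙ = ((Measure.map A ℙ)).prod ((Measure.map W ℙ)) :=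
    (indepFun_iff_map_prod_eq_prod_map_map hA.aemeasurable hW.aemeasurable).mp hAW
  have hVm : Measure.map (fun ω => (A ω, B ω)) ℙ = ((Measure.map A ℙ)).prod ((Measure.map B ℙ)) :=
    (indepFun_iff_map_prod_eq_prod_map_map hA.aemeasurable hB.aemeasurable).mp h2
  have hVWm : Measure.map (fun ω => ((A ω, B ω), W ω)) ℙ
      = (((Measure.map A ℙ)).prod ((Measure.map B ℙ))).prod ((Measure.map W ℙ)) := by
    rw [(indepFun_iff_map_prod_eq_prod_map_map (hA.prodMk hB).aemeasurable
      hW.aemeasurable).mp h1, hVm]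
  rw [hAWm]
  have he : Measurable (fun q : (ℝ × ℝ) × E => (q.1.2, (q.1.1, q.2))) :=
    (measurable_snd.comp measurable_fst).prodMk
      ((measurable_fst.comp measurable_fst).prodMk measurable_snd)
  have hcomp : (fun ω => (B ω, (A ω, W ω)))
      = (fun q : (ℝ × ℝ) × E => (q.1.2, (q.1.1, q.2))) ∘ (fun ω => ((A ω, B ω), W ω)) := rfl
  rw [hcomp, ← Measure.map_map he ((hA.prodMk hB).prodMk hW), hVWm]
  have hsplit : (fun q : (ℝ × ℝ) × E => (q.1.2, (q.1.1, q.2)))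
      = (MeasurableEquiv.prodAssoc : (ℝ × ℝ) × E ≃ᵐ ℝ × ℝ × E)
        ∘ (Prod.map Prod.swap (id : E → E)) := rfl
  rw [hsplit, ← Measure.map_map MeasurableEquiv.prodAssoc.measurable
    (measurable_swap.prodMap measurable_id),
    ← Measure.map_prod_map _ _ measurable_swap measurable_id,
    Measure.prod_swap, Measure.map_id, Measure.prodAssoc_prod]


lemma indep_head_tail {Ω : Type*} [MeasureSpace Ω]
    (V : ℕ → Ω → ℝ × ℝ) (hV : ∀ n, Measurable (V n))
    (hindep : iIndepFun V ℙ) :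
    IndepFun (V 0) (fun ω (k : ℕ) => V (k + 1) ω) ℙ := by
  have h_le : ∀ n, MeasurableSpace.comap (V n) inferInstance ≤ (inferInstance : MeasurableSpace Ω) :=
    fun n => (hV n).comap_le
  have base := indep_biSup_compl h_le hindep ({0} : Set ℕ)
  have hle1 : MeasurableSpace.comap (V 0) inferInstance
      ≤ ⨆ n ∈ ({0} : Set ℕ), MeasurableSpace.comap (V n) inferInstance :=
    le_biSup (f := fun n => MeasurableSpace.comap (V n) inferInstance) (Set.mem_singleton 0)
  have hWm : @Measurable Ω (ℕ → ℝ × ℝ)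
      (⨆ n ∈ (({0} : Set ℕ))ᶜ, MeasurableSpace.comap (V n) inferInstance) _
      (fun ω (k : ℕ) => V (k + 1) ω) := by
    letI : MeasurableSpace Ω := ⨆ n ∈ (({0} : Set ℕ))ᶜ, MeasurableSpace.comap (V n) inferInstance
    refine measurable_pi_lambda _ fun k => ?_
    exact Measurable.of_comap_le
      (le_biSup (f := fun n => MeasurableSpace.comap (V n) inferInstance)
        (by simp : (k + 1 : ℕ) ∈ (({0} : Set ℕ))ᶜ))
  have hle2 := hWm.comap_le
  exact indep_of_indep_of_le_right (indep_of_indep_of_le_left base hle1) hle2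

theorem stmt_11
    {Ω : Type*} [MeasureSpace Ω] [IsProbabilityMeasure (ℙ : Measure Ω)]
    (A B : ℕ → Ω → ℝ) (X Xstar : Ω → ℝ)
    (hA : ∀ n, Measurable (A n)) (hB : ∀ n, Measurable (B n))
    (hX : Measurable X) (hXs : Measurable Xstar)
    (hindep : iIndepFun (fun n ω => (A n ω, B n ω)) ℙ)
    (hident : ∀ n, IdentDistrib (fun ω => (A n ω, B n ω)) (fun ω => (A 0 ω, B 0 ω)) ℙ ℙ)
    (hindepAB : IndepFun (A 0) (B 0) ℙ)
    (hB0 : ℙ {ω | B 0 ω = 0} < 1)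
    (hXconv : ∀ᵐ ω ∂ℙ, Tendsto
      (fun n => ∑ k ∈ Finset.range n, (∏ i ∈ Finset.range k, A i ω) * B k ω)
      atTop (nhds (X ω)))
    (hXsconv : ∀ᵐ ω ∂ℙ, Tendsto
      (fun n => ∑ k ∈ Finset.range n, (∏ i ∈ Finset.range (k + 1), A i ω) * B (k + 1) ω)
      atTop (nhds (Xstar ω)))
    (hA1lt : ℙ {ω | A 0 ω = 1} < 1)
    (habc : ℙ {ω | A 0 ω ∈ Set.Ioc (0 : ℝ) 1} = 1 ∨
      ℙ {ω | A 0 ω ∈ Set.Ioo (-1 : ℝ) 0} = 1 ∨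
      (ℙ {ω | |A 0 ω| ∈ Set.Ioc (0 : ℝ) 1} = 1 ∧
        ℙ {ω | A 0 ω = -1} ∈ Set.Ioo (0 : ENNReal) 1))
    (b : ℝ) (hb : 0 < b) (g : ℝ → ℝ)
    (hBtail : Tendsto (fun x : ℝ =>
      (ℙ {ω | B 0 ω > x}).toReal / (g x * Real.exp (-b * x))) atTop (nhds 1))
    (hgslow : ∀ c : ℝ, 0 < c →
      Tendsto (fun x : ℝ => g (Real.log (c * x)) / g (Real.log x)) atTop (nhds 1))
    (hgsup : ∃ M : ℝ, ∀ᶠ x : ℝ in atTop, ∀ y ∈ Set.Icc (1 : ℝ) x, g y / g x ≤ M)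
    (hXsexp : Integrable (fun ω => Real.exp (b * Xstar ω)) ℙ) :
    Tendsto (fun x : ℝ =>
        (ℙ {ω | X ω > x}).toReal / (ℙ {ω | B 0 ω > x}).toReal)
      atTop (nhds (∫ ω, Real.exp (b * Xstar ω) ∂ℙ)) := by
  -- notation
  set V : ℕ → Ω → ℝ × ℝ := fun n ω => (A n ω, B n ω) with hV
  have hVm : ∀ n, Measurable (V n) := fun n => (hA n).prodMk (hB n)
  set W : Ω → ℕ → ℝ × ℝ := fun ω k => V (k + 1) ω with hW
  have hWm : Measurable W := measurable_pi_lambda _ fun k => hVm (k + 1)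
  -- Step A: independence of V 0 and the tail
  have hIndepV0W : IndepFun (V 0) W ℙ := indep_head_tail V hVm hindep
  -- Step B: B 0 independent of (A 0, W)
  have hBAW : IndepFun (B 0) (fun ω => (A 0 ω, W ω)) ℙ :=
    indep_snd_pair (A 0) (B 0) W (hA 0) (hB 0) hWm hIndepV0W hindepAB
  -- Step C: Xstar is a.e. equal to a measurable function of (A 0, W)
  set f : ℕ → ℝ × (ℕ → ℝ × ℝ) → ℝ :=
    fun n p => ∑ k ∈ range n, (p.1 * ∏ j ∈ range k, (p.2 j).1) * (p.2 k).2 with hf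
  have hfm : ∀ n, Measurable (f n) := by
    intro n
    apply Finset.measurable_sum
    intro k _
    exact (measurable_fst.mul (Finset.measurable_prod _ fun j _ =>
      measurable_fst.comp ((measurable_pi_apply j).comp measurable_snd))).mul
      (measurable_snd.comp ((measurable_pi_apply k).comp measurable_snd))
  set ℓ : ℝ × (ℕ → ℝ × ℝ) → ℝ :=
    fun p => (Filter.limsup (fun n => ((f n p : ℝ) : EReal)) atTop).toReal with hℓ
  have hℓm : Measurable ℓ :=
    (Measurable.limsup fun n => (hfm n).coe_real_ereal).ereal_toReal
  have hXsae : (fun ω => ℓ (A 0 ω, W ω)) =ᵐ[ℙ] Xstar := by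
    filter_upwards [hXsconv] with ω hω
    have hfe : ∀ n, f n (A 0 ω, W ω)
        = ∑ k ∈ range n, (∏ i ∈ range (k + 1), A i ω) * B (k + 1) ω := by
      intro n
      refine Finset.sum_congr rfl fun k _ => ?_
      have hpr : (∏ i ∈ range (k + 1), A i ω) = A 0 ω * ∏ j ∈ range k, A (j + 1) ω := by
        rw [Finset.prod_range_succ']; ring
      rw [hpr]
    have hT : Tendsto (fun n => f n (A 0 ω, W ω)) atTop (nhds (Xstar ω)) :=
      hω.congr fun n => (hfe n).symm
    have hcoe : Tendsto (fun n => ((f n (A 0 ω, W ω) : ℝ) : EReal)) atTop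
        (nhds ((Xstar ω : ℝ) : EReal)) := (continuous_coe_real_ereal.tendsto _).comp hT
    have hls := hcoe.limsup_eq
    show (Filter.limsup (fun n => ((f n (A 0 ω, W ω) : ℝ) : EReal)) atTop).toReal = Xstar ω
    rw [hls, EReal.toReal_coe]
  have hBXs : IndepFun (B 0) Xstar ℙ := by
    have h := hBAW.comp measurable_id hℓm
    exact h.congr (Filter.EventuallyEq.refl _ _) hXsae
  have hXsB : IndepFun Xstar (B 0) ℙ := hBXs.symm
  -- Step D: X = Xstar + B 0 a.e.
  have hXae : X =ᵐ[ℙ] fun ω => Xstar ω + B 0 ω := by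
    filter_upwards [hXconv, hXsconv] with ω h1 h2
    have h3 : Tendsto (fun n => ∑ k ∈ range (n + 1), (∏ i ∈ range k, A i ω) * B k ω)
        atTop (nhds (X ω)) := h1.comp (tendsto_add_atTop_nat 1)
    have h4 : ∀ n, ∑ k ∈ range (n + 1), (∏ i ∈ range k, A i ω) * B k ω
        = (∑ k ∈ range n, (∏ i ∈ range (k + 1), A i ω) * B (k + 1) ω)
          + (∏ i ∈ range 0, A i ω) * B 0 ω :=
      fun n => Finset.sum_range_succ' _ n
    have h5 : Tendsto (fun n => (∑ k ∈ range n, (∏ i ∈ range (k + 1), A i ω) * B (k + 1) ω)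
        + (∏ i ∈ range 0, A i ω) * B 0 ω) atTop (nhds (Xstar ω + B 0 ω)) := by
      simpa using h2.add_const ((∏ i ∈ range 0, A i ω) * B 0 ω)
    exact tendsto_nhds_unique h3 (h5.congr fun n => (h4 n).symm)
  -- Step E: measure identity
  set μY : Measure ℝ := Measure.map Xstar ℙ with hμY
  haveI : IsProbabilityMeasure μY := Measure.isProbabilityMeasure_map hXs.aemeasurable
  haveI : IsProbabilityMeasure (Measure.map (B 0) ℙ) :=
    Measure.isProbabilityMeasure_map (hB 0).aemeasurable
  set r : ℝ → ENNReal := fun t => ℙ {ω | B 0 ω > t} with hr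
  have hrIoi : ∀ t, r t = ℙ ((B 0) ⁻¹' Set.Ioi t) := fun t => rfl
  set rR : ℝ → ℝ := fun t => (r t).toReal with hrR
  have hr_anti : Antitone r := by
    intro s t hst
    rw [hrIoi, hrIoi]
    exact measure_mono (Set.preimage_mono (Set.Ioi_subset_Ioi hst))
  have hrR_anti : Antitone rR := fun s t h =>
    ENNReal.toReal_mono (measure_ne_top ℙ _) (hr_anti h)
  have hrR_meas : Measurable rR := hrR_anti.measurable
  have hrR_nonneg : ∀ t, 0 ≤ rR t := fun t => ENNReal.toReal_nonneg
  have hrR_le_one : ∀ t, rR t ≤ 1 := by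
    intro t
    have h := ENNReal.toReal_mono (by simp) (prob_le_one (μ := ℙ) (s := {ω | B 0 ω > t}))
    simpa using h
  have hkey : ∀ x : ℝ, ℙ {ω | X ω > x} = ∫⁻ y, r (x - y) ∂μY := by
    intro x
    have hset : {ω | X ω > x} =ᵐ[ℙ] {ω | Xstar ω + B 0 ω > x} := by
      filter_upwards [hXae] with ω hω
      show (X ω > x) = (Xstar ω + B 0 ω > x)
      rw [hω]
    rw [measure_congr hset]
    have hpm : Measurable fun ω => (Xstar ω, B 0 ω) := hXs.prodMk (hB 0)
    have hs : MeasurableSet {p : ℝ × ℝ | p.1 + p.2 > x} :=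
      measurableSet_lt measurable_const (measurable_fst.add measurable_snd)
    have h1 : ℙ {ω | Xstar ω + B 0 ω > x}
        = (Measure.map (fun ω => (Xstar ω, B 0 ω)) ℙ) {p : ℝ × ℝ | p.1 + p.2 > x} := by
      rw [Measure.map_apply hpm hs]
      rfl
    rw [h1, (indepFun_iff_map_prod_eq_prod_map_map hXs.aemeasurable
      (hB 0).aemeasurable).mp hXsB, Measure.prod_apply hs]
    refine lintegral_congr fun y => ?_
    have hpre : (Prod.mk y ⁻¹' {p : ℝ × ℝ | p.1 + p.2 > x}) = Set.Ioi (x - y) :=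
      Set.ext fun u => by simp [Set.mem_Ioi, sub_lt_iff_lt_add']
    rw [hpre, Measure.map_apply (hB 0) measurableSet_Ioi, hrIoi]
  have htoReal : ∀ x : ℝ, (ℙ {ω | X ω > x}).toReal = ∫ y, rR (x - y) ∂μY := by
    intro x
    rw [hkey x]
    refine (integral_toReal ?_ ?_).symm
    · exact (hr_anti.measurable.comp (measurable_const.sub measurable_id)).aemeasurable
    · exact ae_of_all _ fun y => measure_lt_top ℙ _
  -- convert the slow-variation hypothesis
  have hgs : ∀ y : ℝ, Tendsto (fun x => g (x - y) / g x) atTop (nhds 1) := by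
    intro y
    have h := (hgslow (Real.exp (-y)) (Real.exp_pos _)).comp Real.tendsto_exp_atTop
    refine h.congr fun x => ?_
    show g (Real.log (Real.exp (-y) * Real.exp x)) / g (Real.log (Real.exp x))
        = g (x - y) / g x
    rw [← Real.exp_add, Real.log_exp, Real.log_exp, show -y + x = x - y by ring]
  have haesm : AEStronglyMeasurable (fun y : ℝ => Real.exp (b * y)) μY :=
    (Real.measurable_exp.comp (measurable_id.const_mul b)).aestronglyMeasurable
  have hexpY : Integrable (fun y : ℝ => Real.exp (b * y)) μY :=
    (integrable_map_measure haesm hXs.aemeasurable).mpr hXsexp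
  have hfinal := tail_conv_lemma μY rR hrR_meas hrR_nonneg hrR_anti hrR_le_one b hb g
    hBtail hgs hgsup hexpY
  have hIeq : ∫ y, Real.exp (b * y) ∂μY = ∫ ω, Real.exp (b * Xstar ω) ∂ℙ :=
    integral_map hXs.aemeasurable haesm
  rw [← hIeq]
  refine hfinal.congr fun x => ?_
  rw [htoReal x]
end
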